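/- arXiv:2008.09511 — 11 statements merged into one kernel-verified Lean document; each statement's English description precedes it below -/
import Mathlib

section
/- Let (Ω, P) be a probability space and (X_i)_{i∈ℕ} a mutually independent family of random variables each taking values in {0,1}. Let X = Σ_{i=0}^∞ X_i (pointwise sum, taken in [0,∞]) and assume E[X] < ∞. Then for every integer k ≥ 2 it holds that E[X^k] ≤ E[X^{k-1}] · (k − 1 + E[X]). -/
open MeasureTheory ProbabilityTheory ENNReal

private lemma pow_one_add_le (s : ℝ≥0∞) (m : ℕ) :
    (1 + s) ^ (m + 1) ≤ s ^ (m + 1) + (m + 1) * (1 + s) ^ m := by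
  induction m with
  | zero => simp [add_comm]
  | succ m ih =>
    have h1 : (1 + s) ^ (m + 2) = (1 + s) * (1 + s) ^ (m + 1) := by ring
    rw [h1]
    calc (1 + s) * (1 + s) ^ (m + 1)
        ≤ (1 + s) * (s ^ (m + 1) + (m + 1) * (1 + s) ^ m) := by
          exact mul_le_mul_right ih _
      _ = s ^ (m + 2) + (s ^ (m + 1) + (m + 1) * (1 + s) ^ (m + 1)) := by ring
      _ ≤ s ^ (m + 2) + ((1 + s) ^ (m + 1) + (m + 1) * (1 + s) ^ (m + 1)) := by
          gcongr
          exact le_add_self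
      _ = s ^ (m + 1 + 1) + (((m + 1 : ℕ) : ℝ≥0∞) + 1) * (1 + s) ^ (m + 1) := by
          push_cast; ring

private lemma finite_case
    {Ω : Type*} [MeasurableSpace Ω] (P : Measure Ω) [IsProbabilityMeasure P]
    (X : ℕ → Ω → ℝ≥0∞) (hmeas : ∀ i, Measurable (X i))
    (h01 : ∀ i ω, X i ω = 0 ∨ X i ω = 1)
    (hindep : iIndepFun X P)
    (s : Finset ℕ) (m : ℕ) :
    ∫⁻ ω, (∑ i ∈ s, X i ω) ^ (m + 2) ∂P ≤
      (∫⁻ ω, (∑ i ∈ s, X i ω) ^ (m + 1) ∂P) *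
        (((m : ℝ≥0∞) + 1) + ∫⁻ ω, (∑ i ∈ s, X i ω) ∂P) := by
  set Y : Ω → ℝ≥0∞ := fun ω => ∑ i ∈ s, X i ω with hY
  have hYmeas : Measurable Y := Finset.measurable_sum s fun i _ => hmeas i
  -- S_i : sum over erase
  set S : ℕ → Ω → ℝ≥0∞ := fun i ω => ∑ j ∈ s.erase i, X j ω with hS
  have hSmeas : ∀ i, Measurable (S i) := fun i =>
    Finset.measurable_sum _ fun j _ => hmeas j
  have hYsplit : ∀ i ∈ s, ∀ ω, Y ω = X i ω + S i ω := by
    intro i hi ω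
    simp only [hY, hS]
    rw [← Finset.add_sum_erase s (fun j => X j ω) hi]
  -- pointwise: X i ω * (Y ω)^p = X i ω * (1 + S i ω)^p
  have hpt : ∀ i ∈ s, ∀ (p : ℕ) (ω), X i ω * (Y ω) ^ p = X i ω * (1 + S i ω) ^ p := by
    intro i hi p ω
    rcases h01 i ω with h | h
    · simp [h]
    · rw [hYsplit i hi ω, h]
  -- independence
  have hind : ∀ i ∈ s, ∀ (p : ℕ),
      IndepFun (X i) (fun ω => (1 + S i ω) ^ p) P := by
    intro i hi p
    have h1 : IndepFun (∑ j ∈ s.erase i, X j) (X i) P :=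
      hindep.indepFun_finsetSum_of_notMem hmeas (Finset.notMem_erase i s)
    have h2 : IndepFun (X i) (∑ j ∈ s.erase i, X j) P := h1.symm
    have h3 := h2.comp (φ := id) (ψ := fun t : ℝ≥0∞ => (1 + t) ^ p) measurable_id
      ((measurable_const.add measurable_id).pow_const p)
    have : (fun t : ℝ≥0∞ => (1 + t) ^ p) ∘ (∑ j ∈ s.erase i, X j) =
        fun ω => (1 + S i ω) ^ p := by
      funext ω; simp [hS, Function.comp, Finset.sum_apply]
    rwa [this] at h3
  have hmul : ∀ i ∈ s, ∀ (p : ℕ),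
      ∫⁻ ω, X i ω * (1 + S i ω) ^ p ∂P =
        (∫⁻ ω, X i ω ∂P) * ∫⁻ ω, (1 + S i ω) ^ p ∂P := by
    intro i hi p
    exact lintegral_mul_eq_lintegral_mul_lintegral_of_indepFun (hmeas i)
      ((measurable_const.add (hSmeas i)).pow_const p) (hind i hi p)
  -- main computation
  have expand : ∀ ω, (Y ω) ^ (m + 2) = ∑ i ∈ s, X i ω * (Y ω) ^ (m + 1) := by
    intro ω
    rw [← Finset.sum_mul]
    show Y ω ^ (m + 2) = Y ω * Y ω ^ (m + 1)
    ring
  calc ∫⁻ ω, (Y ω) ^ (m + 2) ∂P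
      = ∑ i ∈ s, ∫⁻ ω, X i ω * (Y ω) ^ (m + 1) ∂P := by
        simp_rw [expand]
        exact lintegral_finset_sum s fun i _ =>
          (hmeas i).mul (hYmeas.pow_const _)
    _ = ∑ i ∈ s, (∫⁻ ω, X i ω ∂P) * ∫⁻ ω, (1 + S i ω) ^ (m + 1) ∂P := by
        refine Finset.sum_congr rfl fun i hi => ?_
        rw [← hmul i hi]
        exact lintegral_congr fun ω => hpt i hi (m + 1) ω
    _ ≤ ∑ i ∈ s, ((∫⁻ ω, X i ω ∂P) * (∫⁻ ω, (Y ω) ^ (m + 1) ∂P)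
          + ((m : ℝ≥0∞) + 1) * ((∫⁻ ω, X i ω ∂P) * ∫⁻ ω, (1 + S i ω) ^ m ∂P)) := by
        refine Finset.sum_le_sum fun i hi => ?_
        have hb : ∫⁻ ω, (1 + S i ω) ^ (m + 1) ∂P ≤
            ∫⁻ ω, (S i ω) ^ (m + 1) ∂P + ((m : ℝ≥0∞) + 1) * ∫⁻ ω, (1 + S i ω) ^ m ∂P := by
          calc ∫⁻ ω, (1 + S i ω) ^ (m + 1) ∂P
              ≤ ∫⁻ ω, ((S i ω) ^ (m + 1) + ((m : ℝ≥0∞) + 1) * (1 + S i ω) ^ m) ∂P := by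
                refine lintegral_mono fun ω => ?_
                have := pow_one_add_le (S i ω) m
                push_cast at this ⊢
                exact this
            _ = ∫⁻ ω, (S i ω) ^ (m + 1) ∂P + ((m : ℝ≥0∞) + 1) * ∫⁻ ω, (1 + S i ω) ^ m ∂P := by
                rw [lintegral_add_left ((hSmeas i).pow_const _), lintegral_const_mul _
                  (show Measurable (fun ω => (1 + S i ω) ^ m) from (measurable_const.add (hSmeas i)).pow_const m)]
        have hSY : ∫⁻ ω, (S i ω) ^ (m + 1) ∂P ≤ ∫⁻ ω, (Y ω) ^ (m + 1) ∂P := by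
          refine lintegral_mono fun ω => ?_
          exact pow_le_pow_left₀ zero_le (Finset.sum_le_sum_of_subset (Finset.erase_subset i s)) _
        calc (∫⁻ ω, X i ω ∂P) * ∫⁻ ω, (1 + S i ω) ^ (m + 1) ∂P
            ≤ (∫⁻ ω, X i ω ∂P) *
              (∫⁻ ω, (S i ω) ^ (m + 1) ∂P + ((m : ℝ≥0∞) + 1) * ∫⁻ ω, (1 + S i ω) ^ m ∂P) :=
              mul_le_mul_right hb _
          _ = (∫⁻ ω, X i ω ∂P) * ∫⁻ ω, (S i ω) ^ (m + 1) ∂P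
              + ((m : ℝ≥0∞) + 1) * ((∫⁻ ω, X i ω ∂P) * ∫⁻ ω, (1 + S i ω) ^ m ∂P) := by ring
          _ ≤ _ := by gcongr
    _ = (∑ i ∈ s, ∫⁻ ω, X i ω ∂P) * (∫⁻ ω, (Y ω) ^ (m + 1) ∂P)
          + ((m : ℝ≥0∞) + 1) * ∑ i ∈ s, ((∫⁻ ω, X i ω ∂P) * ∫⁻ ω, (1 + S i ω) ^ m ∂P) := by
        rw [Finset.sum_add_distrib, ← Finset.sum_mul, ← Finset.mul_sum]
    _ = (∫⁻ ω, Y ω ∂P) * (∫⁻ ω, (Y ω) ^ (m + 1) ∂P)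
          + ((m : ℝ≥0∞) + 1) * ∫⁻ ω, (Y ω) ^ (m + 1) ∂P := by
        congr 1
        · congr 1
          exact (lintegral_finset_sum s fun i _ => hmeas i).symm
        · congr 1
          have : ∀ i ∈ s, (∫⁻ ω, X i ω ∂P) * ∫⁻ ω, (1 + S i ω) ^ m ∂P
              = ∫⁻ ω, X i ω * (Y ω) ^ m ∂P := by
            intro i hi
            rw [← hmul i hi]
            exact (lintegral_congr fun ω => hpt i hi m ω).symm
          rw [Finset.sum_congr rfl this,
            ← lintegral_finset_sum s fun i _ => (show Measurable (fun ω => X i ω * Y ω ^ m) from (hmeas i).mul (hYmeas.pow_const _))]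
          refine lintegral_congr fun ω => ?_
          rw [← Finset.sum_mul]
          show Y ω * Y ω ^ m = Y ω ^ (m + 1)
          ring
    _ = (∫⁻ ω, (Y ω) ^ (m + 1) ∂P) * (((m : ℝ≥0∞) + 1) + ∫⁻ ω, Y ω ∂P) := by ring

/-- Let `(Ω, P)` be a probability space and `(X i)_{i ∈ ℕ}` a mutually
independent family of random variables each taking values in `{0,1}`. Let
`X = ∑' i, X i` (pointwise, in `[0,∞]`) and assume `E[X] < ∞`. Then for every `k ≥ 2`,
`E[X^k] ≤ E[X^{k-1}] · (k - 1 + E[X])`. -/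
theorem moments_inequality
    {Ω : Type*} [MeasurableSpace Ω] (P : Measure Ω) [IsProbabilityMeasure P]
    (X : ℕ → Ω → ℝ≥0∞) (hmeas : ∀ i, Measurable (X i))
    (h01 : ∀ i ω, X i ω = 0 ∨ X i ω = 1)
    (hindep : iIndepFun X P)
    (hE : ∫⁻ ω, (∑' i, X i ω) ∂P < ⊤)
    (k : ℕ) (hk : 2 ≤ k) :
    ∫⁻ ω, (∑' i, X i ω) ^ k ∂P ≤
      (∫⁻ ω, (∑' i, X i ω) ^ (k - 1) ∂P) *
        (((k : ℝ≥0∞) - 1) + ∫⁻ ω, (∑' i, X i ω) ∂P) := by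
  obtain ⟨m, rfl⟩ : ∃ m, k = m + 2 := ⟨k - 2, by omega⟩
  have hk1 : m + 2 - 1 = m + 1 := by omega
  have hc : ((m + 2 : ℕ) : ℝ≥0∞) - 1 = (m : ℝ≥0∞) + 1 := by
    push_cast
    rw [show (m : ℝ≥0∞) + 2 = ((m : ℝ≥0∞) + 1) + 1 by ring]
    exact ENNReal.add_sub_cancel_right one_ne_top
  rw [hk1, hc]
  set Yn : ℕ → Ω → ℝ≥0∞ := fun n ω => ∑ i ∈ Finset.range n, X i ω with hYn
  have hYnmeas : ∀ n, Measurable (Yn n) := fun n =>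
    Finset.measurable_sum _ fun i _ => hmeas i
  have hYnmono : ∀ ω, Monotone fun n => Yn n ω := fun ω =>
    monotone_nat_of_le_succ fun n => by
      simp only [hYn, Finset.sum_range_succ]; exact le_self_add
  have htsum : ∀ ω, (∑' i, X i ω) = ⨆ n, Yn n ω := fun ω => ENNReal.tsum_eq_iSup_nat
  have hpow : ∀ (p : ℕ), p ≠ 0 → ∀ ω, (∑' i, X i ω) ^ p = ⨆ n, (Yn n ω) ^ p := by
    intro p hp ω
    rw [htsum ω]
    exact Monotone.map_iSup_of_continuousAt (f := fun x : ℝ≥0∞ => x ^ p)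
      (ENNReal.continuous_pow p).continuousAt
      (fun a b hab => pow_le_pow_left₀ zero_le hab p) (zero_pow hp)
  have hle : ∀ n ω, Yn n ω ≤ ∑' i, X i ω := fun n ω => ENNReal.sum_le_tsum _
  calc ∫⁻ ω, (∑' i, X i ω) ^ (m + 2) ∂P
      = ∫⁻ ω, ⨆ n, (Yn n ω) ^ (m + 2) ∂P :=
        lintegral_congr (hpow (m + 2) (by omega))
    _ = ⨆ n, ∫⁻ ω, (Yn n ω) ^ (m + 2) ∂P := by
        refine lintegral_iSup (fun n => (hYnmeas n).pow_const _) ?_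
        intro a b hab ω
        exact pow_le_pow_left₀ zero_le (hYnmono ω hab) _
    _ ≤ (∫⁻ ω, (∑' i, X i ω) ^ (m + 1) ∂P) *
          (((m : ℝ≥0∞) + 1) + ∫⁻ ω, (∑' i, X i ω) ∂P) := by
        refine iSup_le fun n => ?_
        refine le_trans (finite_case P X hmeas h01 hindep (Finset.range n) m) ?_
        refine mul_le_mul' ?_ ?_
        · exact lintegral_mono fun ω => pow_le_pow_left₀ zero_le (hle n ω) _
        · exact add_le_add_right (lintegral_mono fun ω => hle n ω) _
end

section
/- Let (X_i)_{i∈ℕ} be a mutually independent family of random variables on a probability space, each taking values in {0,1}, with Σ_{i=0}^∞ E[X_i] < ∞. Let X = Σ_{i=0}^∞ X_i. Then E[X^k] < ∞ for every k ∈ ℕ. -/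
open MeasureTheory ProbabilityTheory ENNReal

/-- Auxiliary: `m ^ k ≤ k ^ k * 2 ^ m` for naturals. -/
lemma nat_pow_le_pow_mul_two_pow (k m : ℕ) : m ^ k ≤ k ^ k * 2 ^ m := by
  rcases Nat.eq_zero_or_pos k with hk | hk
  · simp [hk, Nat.one_le_two_pow]
  · have h1 : m ≤ (m / k + 1) * k := le_of_lt ((Nat.div_lt_iff_lt_mul hk).mp (Nat.lt_succ_self _))
    have h2 : m / k + 1 ≤ 2 ^ (m / k) := Nat.lt_two_pow_self
    calc m ^ k ≤ ((m / k + 1) * k) ^ k := Nat.pow_le_pow_left h1 k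
      _ = (m / k + 1) ^ k * k ^ k := by rw [mul_pow]
      _ ≤ (2 ^ (m / k)) ^ k * k ^ k := by
          exact Nat.mul_le_mul_right _ (Nat.pow_le_pow_left h2 k)
      _ = 2 ^ (m / k * k) * k ^ k := by rw [← pow_mul]
      _ ≤ 2 ^ m * k ^ k := by
          exact Nat.mul_le_mul_right _ (Nat.pow_le_pow_right (by norm_num) (Nat.div_mul_le_self m k))
      _ = k ^ k * 2 ^ m := mul_comm _ _

/-- Auxiliary: sums and products of `{0,1}`-valued ennreals come from a natural number. -/
lemma exists_nat_sum_prod {f : ℕ → ℝ≥0∞} (hf : ∀ i, f i = 0 ∨ f i = 1) (s : Finset ℕ) :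
    ∃ m : ℕ, ∑ i ∈ s, f i = (m : ℝ≥0∞) ∧ ∏ i ∈ s, (1 + f i) = 2 ^ m := by
  classical
  induction s using Finset.induction_on with
  | empty => exact ⟨0, by simp⟩
  | insert _ _ h ih =>
    rename_i a t
    obtain ⟨m, hm1, hm2⟩ := ih
    rcases hf a with ha | ha
    · exact ⟨m, by simp [Finset.sum_insert h, Finset.prod_insert h, ha, hm1, hm2]⟩
    · refine ⟨m + 1, ?_, ?_⟩
      · rw [Finset.sum_insert h, ha, hm1]
        push_cast
        ring
      · rw [Finset.prod_insert h, ha, hm2, pow_succ]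
        norm_num
        ring

/-- Auxiliary pointwise bound. -/
lemma pointwise_bound {f : ℕ → ℝ≥0∞} (hf : ∀ i, f i = 0 ∨ f i = 1) (s : Finset ℕ) (k : ℕ) :
    (∑ i ∈ s, f i) ^ k ≤ (k : ℝ≥0∞) ^ k * ∏ i ∈ s, (1 + f i) := by
  obtain ⟨m, hm1, hm2⟩ := exists_nat_sum_prod hf s
  rw [hm1, hm2]
  have := Nat.cast_le (α := ℝ≥0∞) |>.mpr (nat_pow_le_pow_mul_two_pow k m)
  push_cast at this
  exact this

/-- Let `(X i)_{i ∈ ℕ}` be a mutually independent family of `{0,1}`-valued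
random variables on a probability space with `∑ i, E[X i] < ∞`, and let `X = ∑' i, X i`.
Then `E[X^k] < ∞` for every `k ∈ ℕ` (the finite moments property). -/
theorem finite_moments_of_indep_indicator_sum
    {Ω : Type*} [MeasurableSpace Ω] (P : Measure Ω) [IsProbabilityMeasure P]
    (X : ℕ → Ω → ℝ≥0∞) (hmeas : ∀ i, Measurable (X i))
    (h01 : ∀ i ω, X i ω = 0 ∨ X i ω = 1)
    (hindep : iIndepFun X P)
    (hsum : ∑' i, ∫⁻ ω, X i ω ∂P < ⊤) :
    ∀ k : ℕ, ∫⁻ ω, (∑' i, X i ω) ^ k ∂P < ⊤ := by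
  intro k
  set p : ℕ → ℝ≥0∞ := fun i => ∫⁻ ω, X i ω ∂P with hp
  set A : ℝ≥0∞ := ∑' i, p i with hA
  have hA_top : A ≠ ⊤ := hsum.ne
  have hp_top : ∀ i, p i ≠ ⊤ := fun i => (ENNReal.lt_top_of_tsum_ne_top hA_top i).ne
  -- the functions 1 + X i
  set g : ℕ → Ω → ℝ≥0∞ := fun i ω => 1 + X i ω with hg
  have hg_meas : ∀ i, Measurable (g i) := fun i => measurable_const.add (hmeas i)
  have hg_indep : iIndepFun g P :=
    hindep.comp (fun _ x => 1 + x) (fun _ => by fun_prop)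
  -- Step 2: integral of finite products
  have step2 : ∀ n : ℕ, ∫⁻ ω, ∏ i ∈ Finset.range n, g i ω ∂P
      = ∏ i ∈ Finset.range n, (1 + p i) := by
    intro n
    induction n with
    | zero => simp
    | succ n ih =>
      have hprod : ∀ ω, ∏ i ∈ Finset.range (n + 1), g i ω
          = (∏ i ∈ Finset.range n, g i) ω * g n ω := by
        intro ω
        simp [Finset.prod_range_succ, Finset.prod_apply]
      have hmeas_prod : Measurable (∏ i ∈ Finset.range n, g i) := by
        have h1 : (∏ i ∈ Finset.range n, g i) = fun ω => ∏ i ∈ Finset.range n, g i ω := by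
          funext ω; simp [Finset.prod_apply]
        rw [h1]
        exact Finset.measurable_prod _ fun i _ => hg_meas i
      have hindep_n : IndepFun (∏ i ∈ Finset.range n, g i) (g n) P :=
        hg_indep.indepFun_prod_range_succ hg_meas n
      calc ∫⁻ ω, ∏ i ∈ Finset.range (n + 1), g i ω ∂P
          = ∫⁻ ω, (∏ i ∈ Finset.range n, g i) ω * g n ω ∂P := by
            exact lintegral_congr hprod
        _ = (∫⁻ ω, (∏ i ∈ Finset.range n, g i) ω ∂P) * ∫⁻ ω, g n ω ∂P :=
            lintegral_mul_eq_lintegral_mul_lintegral_of_indepFun hmeas_prod (hg_meas n) hindep_n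
        _ = (∏ i ∈ Finset.range n, (1 + p i)) * (1 + p n) := by
            congr 1
            · rw [← ih]
              exact lintegral_congr fun ω => by simp [Finset.prod_apply]
            · rw [hg]
              simp only
              rw [lintegral_add_left measurable_const]
              simp [hp]
        _ = ∏ i ∈ Finset.range (n + 1), (1 + p i) := (Finset.prod_range_succ _ n).symm
  -- Step 3: uniform bound on the products of expectations
  have step3 : ∀ n : ℕ, ∏ i ∈ Finset.range n, (1 + p i)
      ≤ ENNReal.ofReal (Real.exp A.toReal) := by
    intro n
    have h1 : ∀ i ∈ Finset.range n, (1 : ℝ≥0∞) + p i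
        = ENNReal.ofReal (1 + (p i).toReal) := by
      intro i _
      rw [ENNReal.ofReal_add (by norm_num) ENNReal.toReal_nonneg, ENNReal.ofReal_one,
        ENNReal.ofReal_toReal (hp_top i)]
    rw [Finset.prod_congr rfl h1, ← ENNReal.ofReal_prod_of_nonneg
      (fun i _ => by positivity)]
    apply ENNReal.ofReal_le_ofReal
    calc ∏ i ∈ Finset.range n, (1 + (p i).toReal)
        ≤ ∏ i ∈ Finset.range n, Real.exp ((p i).toReal) := by
          apply Finset.prod_le_prod
          · intro i _; positivity
          · intro i _; rw [add_comm]; exact Real.add_one_le_exp _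
      _ = Real.exp (∑ i ∈ Finset.range n, (p i).toReal) := (Real.exp_sum _ _).symm
      _ ≤ Real.exp A.toReal := by
          apply Real.exp_le_exp.mpr
          rw [← ENNReal.toReal_sum (fun i _ => hp_top i)]
          exact ENNReal.toReal_mono hA_top (ENNReal.sum_le_tsum _)
  -- key uniform bound on moments of partial sums
  have key : ∀ n : ℕ, ∫⁻ ω, (∑ i ∈ Finset.range n, X i ω) ^ k ∂P
      ≤ (k : ℝ≥0∞) ^ k * ENNReal.ofReal (Real.exp A.toReal) := by
    intro n
    calc ∫⁻ ω, (∑ i ∈ Finset.range n, X i ω) ^ k ∂P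
        ≤ ∫⁻ ω, (k : ℝ≥0∞) ^ k * ∏ i ∈ Finset.range n, g i ω ∂P := by
          apply lintegral_mono
          intro ω
          exact pointwise_bound (fun i => h01 i ω) (Finset.range n) k
      _ = (k : ℝ≥0∞) ^ k * ∫⁻ ω, ∏ i ∈ Finset.range n, g i ω ∂P := by
          apply lintegral_const_mul
          apply Finset.measurable_prod
          intro i _
          exact hg_meas i
      _ = (k : ℝ≥0∞) ^ k * ∏ i ∈ Finset.range n, (1 + p i) := by rw [step2 n]
      _ ≤ (k : ℝ≥0∞) ^ k * ENNReal.ofReal (Real.exp A.toReal) := by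
          exact mul_le_mul_right (step3 n) _
  -- monotone convergence
  have hmono : ∀ ω, Monotone fun n => (∑ i ∈ Finset.range n, X i ω) ^ k := by
    intro ω n m hnm
    exact pow_le_pow_left' (Finset.sum_le_sum_of_subset (Finset.range_subset_range.mpr hnm)) k
  have hsup : ∀ ω, (∑' i, X i ω) ^ k = ⨆ n, (∑ i ∈ Finset.range n, X i ω) ^ k := by
    intro ω
    rw [ENNReal.tsum_eq_iSup_nat]
    exact Monotone.map_ciSup_of_continuousAt (ENNReal.continuous_pow k).continuousAt
      (fun a b hab => pow_le_pow_left' hab k)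
  calc ∫⁻ ω, (∑' i, X i ω) ^ k ∂P
      = ∫⁻ ω, ⨆ n, (∑ i ∈ Finset.range n, X i ω) ^ k ∂P := lintegral_congr hsup
    _ = ⨆ n, ∫⁻ ω, (∑ i ∈ Finset.range n, X i ω) ^ k ∂P := by
        apply lintegral_iSup
        · intro n
          exact (Finset.measurable_sum _ fun i _ => hmeas i).pow_const k
        · intro n m hnm ω
          exact hmono ω hnm
    _ ≤ (k : ℝ≥0∞) ^ k * ENNReal.ofReal (Real.exp A.toReal) := iSup_le key
    _ < ⊤ := ENNReal.mul_lt_top (ENNReal.pow_lt_top (ENNReal.natCast_lt_top k))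
        ENNReal.ofReal_lt_top
end

section
/- Let (Ω, P) be a probability space, F a countable set, and (E_f)_{f∈F} a mutually independent family of events with P(E_f) = p_f. Let A be a finite set and s : F → Finset A. For ω ∈ Ω write I(ω) = {f ∈ F : ω ∈ E_f}. Then P({ω : I(ω) is a fact cover of A}) ≤ Σ_{F'} ∏_{f∈F'} p_f, where the sum ranges over all minimal fact covers F' ⊆ F of A (each minimal fact cover is a finite set, and there are at most countably many of them). -/
open MeasureTheory ProbabilityTheory ENNReal

/-- `F'` is a fact cover of the finite set `A`. -/
def IsFactCover {F α : Type*} (s : F → Finset α) (A : Finset α) (F' : Set F) : Prop :=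
  ∀ a ∈ A, ∃ f ∈ F', a ∈ s f

/-- `F'` is a minimal fact cover of `A`. -/
def IsMinimalFactCover {F α : Type*} (s : F → Finset α) (A : Finset α) (F' : Set F) : Prop :=
  IsFactCover s A F' ∧ ∀ F'' : Set F, F'' ⊂ F' → ¬ IsFactCover s A F''

private lemma exists_minimal_finset_cover {F α : Type*} (s : F → Finset α) (A : Finset α) :
    ∀ C : Finset F, IsFactCover s A (↑C : Set F) →
      ∃ C' : Finset F, C' ⊆ C ∧ IsMinimalFactCover s A (↑C' : Set F) := by
  intro C
  induction C using Finset.strongInduction with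
  | _ C ih =>
    intro hC
    by_cases h : ∃ D : Finset F, D ⊂ C ∧ IsFactCover s A (↑D : Set F)
    · obtain ⟨D, hDC, hD⟩ := h
      obtain ⟨C', hC'D, hC'⟩ := ih D hDC hD
      exact ⟨C', hC'D.trans hDC.subset, hC'⟩
    · refine ⟨C, le_refl _, hC, ?_⟩
      intro F'' hF'' hcov
      have hfin : F''.Finite := (C.finite_toSet.subset hF''.subset)
      apply h
      refine ⟨hfin.toFinset, ?_, ?_⟩
      · rw [← Finset.coe_ssubset]
        simpa [hfin.coe_toFinset] using hF''
      · simpa [hfin.coe_toFinset] using hcov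

/-- Let `(Ω, P)` be a probability space, `F` a countable set and
`(E f)_{f ∈ F}` a mutually independent family of events with `P (E f) = p f`. Let `A` be
a finite set and `s : F → Finset A`. Writing `I(ω) = {f | ω ∈ E f}`, the probability that
`I(ω)` is a fact cover of `A` is at most the sum, over all minimal fact covers `F'` of `A`
(each a finite set, and there are at most countably many), of `∏_{f ∈ F'} p f`. -/
theorem prob_factCover_le_sum_minimal_factCovers
    {Ω F α : Type*} [MeasurableSpace Ω] [Countable F]
    (P : Measure Ω) [IsProbabilityMeasure P]
    (E : F → Set Ω) (hmeas : ∀ f, MeasurableSet (E f))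
    (hindep : iIndepSet E P)
    (p : F → ℝ≥0∞) (hp : ∀ f, P (E f) = p f)
    (A : Finset α) (s : F → Finset α) :
    P {ω | IsFactCover s A {f | ω ∈ E f}} ≤
      ∑' C : {C : Finset F // IsMinimalFactCover s A (↑C : Set F)},
        ∏ f ∈ (C : Finset F), p f := by
  classical
  have hsub : {ω | IsFactCover s A {f | ω ∈ E f}} ⊆
      ⋃ C : {C : Finset F // IsMinimalFactCover s A (↑C : Set F)}, ⋂ f ∈ (C : Finset F), E f := by
    intro ω hω
    simp only [Set.mem_setOf_eq] at hω
    -- build a finite cover inside I(ω)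
    have hchoice : ∀ a : {a // a ∈ A}, ∃ f, ω ∈ E f ∧ (a : α) ∈ s f := by
      rintro ⟨a, ha⟩
      obtain ⟨f, hf1, hf2⟩ := hω a ha
      exact ⟨f, hf1, hf2⟩
    choose g hg1 hg2 using hchoice
    set C0 : Finset F := A.attach.image g with hC0
    have hC0cov : IsFactCover s A (↑C0 : Set F) := by
      intro a ha
      exact ⟨g ⟨a, ha⟩, by simp [hC0], hg2 ⟨a, ha⟩⟩
    obtain ⟨C', hC'sub, hC'⟩ := exists_minimal_finset_cover s A C0 hC0cov
    refine Set.mem_iUnion.2 ⟨⟨C', hC'⟩, ?_⟩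
    simp only [Set.mem_iInter]
    intro f hf
    have : f ∈ C0 := hC'sub hf
    obtain ⟨a, _, rfl⟩ := Finset.mem_image.1 this
    exact hg1 a
  calc P {ω | IsFactCover s A {f | ω ∈ E f}}
      ≤ P (⋃ C : {C : Finset F // IsMinimalFactCover s A (↑C : Set F)},
            ⋂ f ∈ (C : Finset F), E f) := measure_mono hsub
    _ ≤ ∑' C : {C : Finset F // IsMinimalFactCover s A (↑C : Set F)},
          P (⋂ f ∈ (C : Finset F), E f) := measure_iUnion_le _
    _ = ∑' C : {C : Finset F // IsMinimalFactCover s A (↑C : Set F)},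
          ∏ f ∈ (C : Finset F), p f := by
        refine tsum_congr fun C => ?_
        rw [hindep.meas_biInter]
        exact Finset.prod_congr rfl fun f _ => hp f
end

section
/- Let (Ω, P) be a probability space, F a countable set, and (E_f)_{f∈F} a mutually independent family of events with P(E_f) = p_f. Let r ≥ 1 be an integer, let A be a finite set with |A| = n ≥ 1, and let s : F → Finset A satisfy ∅ ≠ s(f) and |s(f)| ≤ r for every f ∈ F. For ω ∈ Ω write I(ω) = {f ∈ F : ω ∈ E_f}. Then P({ω : A ⊆ ⋃_{f∈I(ω)} s(f)}) ≤ n · (r² · n^{r−1} · Σ_{f∈F} p_f)^{n/r}, where the exponent n/r is a real number. -/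
open MeasureTheory ProbabilityTheory ENNReal

lemma tsum_pi_prod {F : Type*} [Countable F] (p : F → ℝ≥0∞) :
    ∀ m : ℕ, ∑' g : Fin m → F, ∏ i, p (g i) = (∑' f, p f) ^ m := by
  intro m
  induction m with
  | zero =>
      haveI : Unique (Fin 0 → F) := ⟨⟨fun i => i.elim0⟩, fun g => funext fun i => i.elim0⟩
      rw [tsum_eq_single (default : Fin 0 → F) (fun b hb => absurd (Subsingleton.elim b default) hb)]
      simp
  | succ m ih =>
      rw [← (Fin.consEquiv (fun _ : Fin (m + 1) => F)).tsum_eq]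
      have h1 : ∀ x : F × (Fin m → F),
          ∏ i, p ((Fin.consEquiv (fun _ : Fin (m + 1) => F)) x i)
            = p x.1 * ∏ i, p (x.2 i) := by
        intro x
        rw [Fin.prod_univ_succ]
        simp [Fin.consEquiv]
      simp_rw [h1]
      rw [ENNReal.tsum_prod']
      simp_rw [ENNReal.tsum_mul_left]
      rw [ENNReal.tsum_mul_right, ih, pow_succ]
      ring

/-- Let `(Ω, P)` be a probability space, `F` a countable set and
`(E f)_{f ∈ F}` mutually independent events with `P (E f) = p f`. Let `r ≥ 1`, let `A` be
a finite set with `|A| = n ≥ 1`, and let `s : F → Finset A` satisfy `∅ ≠ s f` and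
`|s f| ≤ r` for all `f`. Then the probability that the random set of facts
`I(ω) = {f | ω ∈ E f}` covers `A` is at most
`n · (r² · n^{r-1} · ∑_f p f) ^ (n/r)` (real exponent `n/r`). -/
theorem prob_cover_le
    {Ω F α : Type*} [MeasurableSpace Ω] [Countable F]
    (P : Measure Ω) [IsProbabilityMeasure P]
    (E : F → Set Ω) (hmeas : ∀ f, MeasurableSet (E f))
    (hindep : iIndepSet E P)
    (p : F → ℝ≥0∞) (hp : ∀ f, P (E f) = p f)
    (r : ℕ) (hr : 1 ≤ r)
    (A : Finset α) (n : ℕ) (hn : A.card = n) (hn1 : 1 ≤ n)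
    (s : F → Finset α) (hne : ∀ f, s f ≠ ∅) (hcard : ∀ f, (s f).card ≤ r) :
    P {ω | ∀ a ∈ A, ∃ f, ω ∈ E f ∧ a ∈ s f} ≤
      (n : ℝ≥0∞) *
        ((r : ℝ≥0∞) ^ 2 * (n : ℝ≥0∞) ^ (r - 1) * ∑' f, p f) ^ ((n : ℝ) / (r : ℝ)) := by
  classical
  set q : ℝ≥0∞ := ∑' f, p f with hq
  set c : ℝ≥0∞ := (r : ℝ≥0∞) ^ 2 * (n : ℝ≥0∞) ^ (r - 1) with hcdef
  set m : ℕ := (n + r - 1) / r with hm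
  have hrpos : 0 < r := hr
  have hone_le_n : (1 : ℝ≥0∞) ≤ (n : ℝ≥0∞) := by exact_mod_cast hn1
  have hone_le_r : (1 : ℝ≥0∞) ≤ (r : ℝ≥0∞) := by exact_mod_cast hr
  have hc1 : (1 : ℝ≥0∞) ≤ c := by
    rw [hcdef]
    calc (1 : ℝ≥0∞) = 1 * 1 := (one_mul 1).symm
    _ ≤ (r : ℝ≥0∞) ^ 2 * (n : ℝ≥0∞) ^ (r - 1) :=
        mul_le_mul' (one_le_pow_of_one_le' hone_le_r 2) (one_le_pow_of_one_le' hone_le_n (r - 1))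
  have hexp_pos : (0 : ℝ) < (n : ℝ) / (r : ℝ) := by
    apply div_pos <;> [exact_mod_cast hn1; exact_mod_cast hrpos]
  -- key: n ≤ m * r
  have hnmr : n ≤ m * r := by
    rw [hm]
    have := Nat.lt_div_mul_add (a := n + r - 1) hrpos
    omega
  -- key probabilistic bound : P(cover) ≤ q ^ m
  have hsubset : {ω | ∀ a ∈ A, ∃ f, ω ∈ E f ∧ a ∈ s f} ⊆
      ⋃ g : {g : Fin m → F // Function.Injective g}, ⋂ i, E (g.1 i) := by
    intro ω hω
    set cho : {a // a ∈ A} → F := fun a => (hω a.1 a.2).choose with hcho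
    set T : Finset F := A.attach.image cho with hT
    have hTE : ∀ f ∈ T, ω ∈ E f := by
      intro f hf
      rcases Finset.mem_image.1 hf with ⟨a, _, rfl⟩
      exact (hω a.1 a.2).choose_spec.1
    have hcov : A ⊆ T.biUnion s := by
      intro a ha
      refine Finset.mem_biUnion.2 ⟨cho ⟨a, ha⟩, Finset.mem_image_of_mem _ (Finset.mem_attach _ _),
        (hω a ha).choose_spec.2⟩
    have hcardT : n ≤ T.card * r := by
      calc n = A.card := hn.symm
      _ ≤ (T.biUnion s).card := Finset.card_le_card hcov
      _ ≤ ∑ f ∈ T, (s f).card := Finset.card_biUnion_le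
      _ ≤ T.card * r := by
          calc ∑ f ∈ T, (s f).card ≤ T.card • r :=
            Finset.sum_le_card_nsmul _ _ _ (fun f _ => hcard f)
          _ = T.card * r := by rw [smul_eq_mul]
    have hmT : m ≤ T.card := by
      rw [hm, Nat.div_le_iff_le_mul_add_pred hrpos]
      have : T.card * r = r * T.card := Nat.mul_comm _ _
      omega
    obtain ⟨T', hT'sub, hT'card⟩ := Finset.exists_subset_card_eq hmT
    set g : Fin m → F := fun i => (T'.equivFin.symm (Fin.cast hT'card.symm i)).1 with hg
    have hginj : Function.Injective g :=
      Subtype.val_injective.comp (T'.equivFin.symm.injective.comp (Fin.cast_injective _))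
    refine Set.mem_iUnion.2 ⟨⟨g, hginj⟩, Set.mem_iInter.2 fun i => ?_⟩
    exact hTE _ (hT'sub (T'.equivFin.symm (Fin.cast hT'card.symm i)).2)
  have hmeasInter : ∀ g : Fin m → F, Function.Injective g →
      P (⋂ i, E (g i)) = ∏ i, p (g i) := by
    intro g hg
    have hset : (⋂ i, E (g i)) = ⋂ f ∈ Finset.univ.image g, E f := by
      ext ω
      simp only [Set.mem_iInter, Finset.mem_image, Finset.mem_univ, true_and]
      constructor
      · rintro h f ⟨i, rfl⟩; exact h i
      · intro h i; exact h (g i) ⟨i, rfl⟩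
    rw [hset, hindep.meas_biInter,
      Finset.prod_image (fun i _ j _ h => hg h)]
    simp [hp]
  have hPm : P {ω | ∀ a ∈ A, ∃ f, ω ∈ E f ∧ a ∈ s f} ≤ q ^ m := by
    calc P {ω | ∀ a ∈ A, ∃ f, ω ∈ E f ∧ a ∈ s f}
        ≤ P (⋃ g : {g : Fin m → F // Function.Injective g}, ⋂ i, E (g.1 i)) :=
          measure_mono hsubset
      _ ≤ ∑' g : {g : Fin m → F // Function.Injective g}, P (⋂ i, E (g.1 i)) :=
          measure_iUnion_le _
      _ = ∑' g : {g : Fin m → F // Function.Injective g}, ∏ i, p (g.1 i) := by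
          apply tsum_congr; intro g; exact hmeasInter g.1 g.2
      _ ≤ ∑' g : Fin m → F, ∏ i, p (g i) :=
          ENNReal.tsum_comp_le_tsum_of_injective Subtype.val_injective _
      _ = q ^ m := tsum_pi_prod p m
  by_cases hcq : 1 ≤ c * q
  · calc P {ω | ∀ a ∈ A, ∃ f, ω ∈ E f ∧ a ∈ s f} ≤ 1 := prob_le_one
    _ = 1 * 1 := (one_mul 1).symm
    _ ≤ (n : ℝ≥0∞) * (c * q) ^ ((n : ℝ) / (r : ℝ)) :=
        mul_le_mul' hone_le_n (ENNReal.one_le_rpow hcq hexp_pos)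
  · push_neg at hcq
    have hqc : q ≤ c * q := le_mul_of_one_le_left' hc1
    have hq1 : q ≤ 1 := hqc.trans hcq.le
    have hexp_le : (n : ℝ) / (r : ℝ) ≤ (m : ℕ) := by
      rw [div_le_iff₀ (by exact_mod_cast hrpos)]
      exact_mod_cast hnmr
    calc P {ω | ∀ a ∈ A, ∃ f, ω ∈ E f ∧ a ∈ s f} ≤ q ^ m := hPm
    _ = q ^ (m : ℝ) := (ENNReal.rpow_natCast q m).symm
    _ ≤ q ^ ((n : ℝ) / (r : ℝ)) := ENNReal.rpow_le_rpow_of_exponent_ge hq1 hexp_le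
    _ ≤ (c * q) ^ ((n : ℝ) / (r : ℝ)) := ENNReal.rpow_le_rpow hqc hexp_pos.le
    _ ≤ (n : ℝ≥0∞) * (c * q) ^ ((n : ℝ) / (r : ℝ)) := le_mul_of_one_le_left' hone_le_n
end

section
/- Let (s_i)_{i∈ℕ} be a sequence of positive integers and (p_i)_{i∈ℕ} a sequence in [0,1] with Σ_{i} p_i ≤ 1. Then the following are equivalent: (1) there exists a positive integer c such that Σ_{i} ⌈s_i/c⌉ · p_i^{1/⌈s_i/c⌉} < ∞; (2) there exists a positive integer c such that Σ_{i} s_i · p_i^{c/s_i} < ∞. (All exponents are real numbers.) -/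
private lemma rpow_mono_aux {p a b : ℝ} (hp0 : 0 ≤ p) (hp1 : p ≤ 1)
    (hb : 0 < b) (hab : b ≤ a) : p ^ a ≤ p ^ b := by
  rcases eq_or_lt_of_le hp0 with h | h
  · rw [← h, Real.zero_rpow (by linarith : a ≠ 0), Real.zero_rpow (by linarith : b ≠ 0)]
  · exact Real.rpow_le_rpow_of_exponent_ge h hp1 hab

/-- Let `(s i)` be positive integers and `(p i)` a `[0,1]`-valued
sequence with `∑ i, p i ≤ 1`. Then the following are equivalent:
(1) there is a positive integer `c` with `∑ i, ⌈s i / c⌉ · (p i)^(1/⌈s i / c⌉) < ∞`;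
(2) there is a positive integer `c` with `∑ i, s i · (p i)^(c / s i) < ∞`.
(All exponents are real.) -/
theorem ceil_segment_condition_iff
    (s : ℕ → ℕ) (hs : ∀ i, 1 ≤ s i)
    (p : ℕ → ℝ) (hp0 : ∀ i, 0 ≤ p i) (hp1 : ∀ i, p i ≤ 1)
    (hpsum : Summable p) (hple : ∑' i, p i ≤ 1) :
    (∃ c : ℕ, 0 < c ∧
        Summable fun i =>
          (⌈(s i : ℝ) / (c : ℝ)⌉₊ : ℝ) * p i ^ ((1 : ℝ) / (⌈(s i : ℝ) / (c : ℝ)⌉₊ : ℝ))) ↔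
      (∃ c : ℕ, 0 < c ∧
        Summable fun i => (s i : ℝ) * p i ^ ((c : ℝ) / (s i : ℝ))) := by
  constructor
  · rintro ⟨c, hc, hsum⟩
    refine ⟨c, hc, ?_⟩
    have hcR : (0 : ℝ) < c := by exact_mod_cast hc
    refine Summable.of_nonneg_of_le
      (fun i => mul_nonneg (Nat.cast_nonneg _) (Real.rpow_nonneg (hp0 i) _))
      (fun i => ?_) (hsum.mul_left (c : ℝ))
    have hsR : (0 : ℝ) < s i := by exact_mod_cast hs i
    set M : ℝ := (⌈(s i : ℝ) / (c : ℝ)⌉₊ : ℝ) with hM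
    have hMpos : (0 : ℝ) < M := by
      have h0 : 0 < ⌈(s i : ℝ) / (c : ℝ)⌉₊ := Nat.ceil_pos.mpr (by positivity)
      rw [hM]; exact_mod_cast h0
    have hle : (s i : ℝ) / c ≤ M := Nat.le_ceil _
    have hsM : (s i : ℝ) ≤ c * M := by
      rw [div_le_iff₀ hcR] at hle; linarith
    have hexp : (1 : ℝ) / M ≤ (c : ℝ) / (s i : ℝ) := by
      rw [div_le_div_iff₀ hMpos hsR]; linarith
    calc (s i : ℝ) * p i ^ ((c : ℝ) / (s i : ℝ))
        ≤ (c * M) * (p i ^ ((1:ℝ) / M)) := by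
          exact mul_le_mul hsM
            (rpow_mono_aux (hp0 i) (hp1 i) (one_div_pos.mpr hMpos) hexp)
            (Real.rpow_nonneg (hp0 i) _) (by positivity)
      _ = (c : ℝ) * (M * p i ^ ((1:ℝ) / M)) := by ring
  · rintro ⟨c, hc, hsum⟩
    refine ⟨2 * c, by positivity, ?_⟩
    have hcR : (0 : ℝ) < c := by exact_mod_cast hc
    have hc1 : (1 : ℝ) ≤ c := by exact_mod_cast hc
    refine Summable.of_nonneg_of_le
      (fun i => mul_nonneg (Nat.cast_nonneg _) (Real.rpow_nonneg (hp0 i) _))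
      (fun i => ?_) (hpsum.add hsum)
    have hsR : (0 : ℝ) < s i := by exact_mod_cast hs i
    have h2c : ((2 * c : ℕ) : ℝ) = 2 * (c : ℝ) := by push_cast; ring
    have hterm2 : (0 : ℝ) ≤ (s i : ℝ) * p i ^ ((c : ℝ) / (s i : ℝ)) :=
      mul_nonneg (Nat.cast_nonneg _) (Real.rpow_nonneg (hp0 i) _)
    by_cases hcase : (s i : ℝ) ≤ 2 * c
    · have hceil : ⌈(s i : ℝ) / ((2 * c : ℕ) : ℝ)⌉₊ = 1 := by
        rw [h2c]
        have h1 : (s i : ℝ) / (2 * c) ≤ 1 := by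
          rw [div_le_one (by positivity)]; exact hcase
        have h2 : (0 : ℝ) < (s i : ℝ) / (2 * c) := by positivity
        have hle1 : ⌈(s i : ℝ) / (2 * (c:ℝ))⌉₊ ≤ 1 := Nat.ceil_le.mpr (by exact_mod_cast h1)
        have hge1 : 0 < ⌈(s i : ℝ) / (2 * (c:ℝ))⌉₊ := Nat.ceil_pos.mpr h2
        omega
      rw [hceil]
      simp only [Nat.cast_one, one_mul, div_one, Real.rpow_one]
      linarith [hterm2]
    · push_neg at hcase
      set M : ℝ := (⌈(s i : ℝ) / ((2 * c : ℕ) : ℝ)⌉₊ : ℝ) with hM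
      have hMpos : (0 : ℝ) < M := by
        have h0 : 0 < ⌈(s i : ℝ) / ((2 * c : ℕ) : ℝ)⌉₊ :=
          Nat.ceil_pos.mpr (by rw [h2c]; positivity)
        rw [hM]; exact_mod_cast h0
      have hx : (0:ℝ) ≤ (s i : ℝ) / ((2 * c : ℕ) : ℝ) := by rw [h2c]; positivity
      have hMlt : M < (s i : ℝ) / ((2 * c : ℕ) : ℝ) + 1 := Nat.ceil_lt_add_one hx
      have hone : (1:ℝ) ≤ (s i : ℝ) / ((2 * c : ℕ) : ℝ) := by
        rw [h2c, le_div_iff₀ (by positivity)]; linarith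
      have hMle : M ≤ (s i : ℝ) / c := by
        rw [h2c] at hMlt hone
        have h3 : M < (s i : ℝ) / (2*c) + (s i : ℝ) / (2*c) := by linarith
        have h4 : (s i : ℝ) / (2*c) + (s i : ℝ) / (2*c) = (s i : ℝ) / c := by
          field_simp; ring
        linarith [h4 ▸ h3]
      have hMc : M * c ≤ (s i : ℝ) := by rwa [le_div_iff₀ hcR] at hMle
      have hMs : M ≤ (s i : ℝ) := by nlinarith
      have hexp : (c : ℝ) / (s i : ℝ) ≤ 1 / M := by
        rw [div_le_div_iff₀ hsR hMpos]; linarith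
      have hle' : M * p i ^ ((1:ℝ) / M) ≤ (s i : ℝ) * p i ^ ((c : ℝ) / (s i : ℝ)) :=
        mul_le_mul hMs
          (rpow_mono_aux (hp0 i) (hp1 i) (by positivity) hexp)
          (Real.rpow_nonneg (hp0 i) _) (le_of_lt hsR)
      linarith [hp0 i]
end

section
/- Let (p_i)_{i∈ℕ} be nonnegative reals with Σ_{i} p_i = 1, and let (A_i)_{i∈ℕ} be a mutually independent family of events on a probability space with P(A_i) = p_i/(1+p_i). Let Z = ∏_{i=0}^∞ (1 − p_i/(1+p_i)) (the limit of the partial products). Then Z > 0; for each i, the probability that A_i occurs and no A_j with j ≠ i occurs equals Z·p_i; the probability that exactly one of the events A_i occurs equals Z; and hence, conditioned on exactly one of the events occurring, the probability that A_i is the occurring event equals p_i. -/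
open MeasureTheory ProbabilityTheory ENNReal Filter

/-- Let `(p i)` be nonnegative reals with `∑ i, p i = 1`, and `(A i)`
a mutually independent family of events with `P (A i) = p i / (1 + p i)`. Let
`Z = ∏_{i} (1 - p i / (1 + p i))` (limit of the partial products). Then `Z > 0`; the
probability that `A i` occurs and no other `A j` occurs is `Z · p i`; the probability
that exactly one of the events occurs is `Z`; hence conditioned on exactly one event
occurring, the probability that it is `A i` equals `p i`. -/
theorem rescaled_marginals_conditioning
    {Ω : Type*} [MeasurableSpace Ω] (P : Measure Ω) [IsProbabilityMeasure P]
    (p : ℕ → ℝ) (hp0 : ∀ i, 0 ≤ p i) (hpsum : Summable p) (hp1 : ∑' i, p i = 1)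
    (A : ℕ → Set Ω) (hA : ∀ i, MeasurableSet (A i)) (hindep : iIndepSet A P)
    (hPA : ∀ i, P (A i) = ENNReal.ofReal (p i / (1 + p i)))
    (Z : ℝ≥0∞)
    (hZ : Tendsto (fun n => ∏ i ∈ Finset.range n, (1 - ENNReal.ofReal (p i / (1 + p i))))
      atTop (nhds Z)) :
    0 < Z ∧
      (∀ i, P {ω | ω ∈ A i ∧ ∀ j, j ≠ i → ω ∉ A j} = Z * ENNReal.ofReal (p i)) ∧
      P {ω | ∃! i, ω ∈ A i} = Z ∧
      (∀ i, P {ω | ω ∈ A i ∧ ∀ j, j ≠ i → ω ∉ A j} / P {ω | ∃! i, ω ∈ A i} =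
        ENNReal.ofReal (p i)) := by
  set q : ℕ → ℝ≥0∞ := fun i => ENNReal.ofReal (p i / (1 + p i)) with hq
  have hp1pos : ∀ i, (0:ℝ) < 1 + p i := fun i => by linarith [hp0 i]
  -- 1 - q i = ofReal ((1 + p i)⁻¹)
  have hone : ∀ i, (1:ℝ≥0∞) - q i = ENNReal.ofReal ((1 + p i)⁻¹) := by
    intro i
    rw [hq, ← ENNReal.ofReal_one,
      ← ENNReal.ofReal_sub 1 (div_nonneg (hp0 i) (hp1pos i).le)]
    rw [one_sub_div (hp1pos i).ne', add_sub_cancel_right, one_div]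
  have hqlt1 : ∀ i, q i < 1 := by
    intro i
    rw [hq, ← ENNReal.ofReal_one]
    refine (ENNReal.ofReal_lt_ofReal_iff_of_nonneg
      (div_nonneg (hp0 i) (hp1pos i).le)).2 ?_
    rw [div_lt_one (hp1pos i)]; linarith [hp0 i]
  have honene0 : ∀ i, (1:ℝ≥0∞) - q i ≠ 0 := fun i => (tsub_pos_of_lt (hqlt1 i)).ne'
  have honenetop : ∀ i, (1:ℝ≥0∞) - q i ≠ ∞ :=
    fun i => ne_top_of_le_ne_top one_ne_top tsub_le_self
  have hqid : ∀ i, q i = ENNReal.ofReal (p i) * (1 - q i) := by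
    intro i
    rw [hone i, ← ENNReal.ofReal_mul (hp0 i)]
    exact congrArg ENNReal.ofReal (div_eq_mul_inv _ _)
  -- independence on finite intersections with complements
  have key : ∀ (s : Finset ℕ), ∀ i ∉ s,
      P (A i ∩ ⋂ j ∈ s, (A j)ᶜ) = q i * ∏ j ∈ s, (1 - q j) := by
    intro s i his
    have hm : ∀ j ∈ insert i s,
        MeasurableSet[MeasurableSpace.generateFrom {A j}]
          (if j = i then A j else (A j)ᶜ) := by
      intro j _
      split
      · exact MeasurableSpace.measurableSet_generateFrom rfl
      · exact (MeasurableSpace.measurableSet_generateFrom (s := {A j}) rfl).compl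
    have h := ProbabilityTheory.iIndep.meas_biInter
      (m := fun j => MeasurableSpace.generateFrom {A j}) hindep hm
    have hset : (⋂ j ∈ insert i s, (if j = i then A j else (A j)ᶜ))
        = A i ∩ ⋂ j ∈ s, (A j)ᶜ := by
      rw [Finset.set_biInter_insert, if_pos rfl]
      congr 1
      exact Set.iInter₂_congr fun j hj => by
        rw [if_neg (fun (h : j = i) => his (h ▸ hj))]
    rw [hset] at h
    rw [h, Finset.prod_insert his, if_pos rfl, hPA i]
    congr 1
    refine Finset.prod_congr rfl fun j hj => ?_
    rw [if_neg (fun (h : j = i) => his (h ▸ hj)), prob_compl_eq_one_sub (hA j), hPA j]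
  -- the "exactly i" events
  set E : ℕ → Set Ω := fun i => A i ∩ ⋂ j, ⋂ (_ : j ≠ i), (A j)ᶜ with hE
  have hEset : ∀ i, {ω | ω ∈ A i ∧ ∀ j, j ≠ i → ω ∉ A j} = E i := by
    intro i
    ext ω
    simp [hE, Set.mem_iInter]
  have hEmeas : ∀ i, MeasurableSet (E i) :=
    fun i => (hA i).inter (MeasurableSet.iInter fun j =>
      MeasurableSet.iInter fun _ => (hA j).compl)
  -- Z bounds
  have hZle1 : Z ≤ 1 := by
    refine le_of_tendsto hZ (Eventually.of_forall fun n => ?_)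
    calc ∏ i ∈ Finset.range n, (1 - q i) ≤ ∏ i ∈ Finset.range n, 1 :=
          Finset.prod_le_prod' fun i _ => tsub_le_self
      _ = 1 := Finset.prod_const_one
  have hZnetop : Z ≠ ∞ := ne_top_of_le_ne_top one_ne_top hZle1
  have hZpos : 0 < Z := by
    have hlow : ∀ n, ENNReal.ofReal (Real.exp 1)⁻¹ ≤ ∏ j ∈ Finset.range n, (1 - q j) := by
      intro n
      have h1 : ∏ j ∈ Finset.range n, (1 - q j)
          = ENNReal.ofReal (∏ j ∈ Finset.range n, (1 + p j)⁻¹) := by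
        rw [ENNReal.ofReal_prod_of_nonneg fun j _ => inv_nonneg.2 (hp1pos j).le]
        exact Finset.prod_congr rfl fun j _ => hone j
      rw [h1]
      apply ENNReal.ofReal_le_ofReal
      rw [Finset.prod_inv_distrib]
      have hprod : ∏ j ∈ Finset.range n, (1 + p j) ≤ Real.exp 1 := by
        calc ∏ j ∈ Finset.range n, (1 + p j)
            ≤ ∏ j ∈ Finset.range n, Real.exp (p j) :=
              Finset.prod_le_prod (fun j _ => (hp1pos j).le)
                (fun j _ => by linarith [Real.add_one_le_exp (p j)])
          _ = Real.exp (∑ j ∈ Finset.range n, p j) := (Real.exp_sum _ _).symm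
          _ ≤ Real.exp 1 := by
              apply Real.exp_le_exp.2
              rw [← hp1]
              exact Summable.sum_le_tsum _ (fun j _ => hp0 j) hpsum
      exact inv_anti₀ (Finset.prod_pos fun j _ => hp1pos j) hprod
    have := ge_of_tendsto hZ (Eventually.of_forall hlow)
    calc (0:ℝ≥0∞) < ENNReal.ofReal (Real.exp 1)⁻¹ :=
          ENNReal.ofReal_pos.2 (by positivity)
      _ ≤ Z := this
  -- the measure of E i
  have hPE : ∀ i, P (E i) = Z * ENNReal.ofReal (p i) := by
    intro i
    set C : ℕ → Set Ω := fun n => A i ∩ ⋂ j ∈ (Finset.range n).erase i, (A j)ᶜ with hC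
    have hCmeas : ∀ n, MeasurableSet (C n) :=
      fun n => (hA i).inter (Finset.measurableSet_biInter _ fun j _ => (hA j).compl)
    have hCanti : Antitone C := by
      intro m n hmn ω hω
      obtain ⟨h1, h2⟩ := hω
      rw [Set.mem_iInter₂] at h2
      refine ⟨h1, Set.mem_iInter₂.2 fun j hj => ?_⟩
      obtain ⟨hji, hjm⟩ := Finset.mem_erase.1 hj
      exact h2 j (Finset.mem_erase.2 ⟨hji,
        Finset.mem_range.2 (lt_of_lt_of_le (Finset.mem_range.1 hjm) hmn)⟩)
    have hCiInter : ⋂ n, C n = E i := by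
      ext ω
      simp only [hC, hE, Set.mem_iInter, Set.mem_inter_iff, Finset.mem_erase,
        Finset.mem_range, Set.mem_compl_iff, and_imp]
      constructor
      · intro h
        exact ⟨(h 0).1, fun j hj => (h (j + 1)).2 j hj (Nat.lt_succ_self j)⟩
      · intro h n
        exact ⟨h.1, fun j hj _ => h.2 j hj⟩
    have htend : Tendsto (fun n => P (C n)) atTop (nhds (P (E i))) := by
      rw [← hCiInter]
      exact tendsto_measure_iInter_atTop (fun n => (hCmeas n).nullMeasurableSet)
        hCanti ⟨0, measure_ne_top _ _⟩
    have hPC : ∀ n, P (C n) = q i * ∏ j ∈ (Finset.range n).erase i, (1 - q j) :=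
      fun n => key _ i (fun h => (Finset.mem_erase.1 h).1 rfl)
    -- multiply by (1 - q i)
    have h1 : Tendsto (fun n => (1 - q i) * P (C n)) atTop
        (nhds ((1 - q i) * P (E i))) :=
      ENNReal.Tendsto.const_mul htend (Or.inr (honenetop i))
    have h2 : Tendsto (fun n => q i * ∏ j ∈ Finset.range n, (1 - q j)) atTop
        (nhds (q i * Z)) :=
      ENNReal.Tendsto.const_mul hZ (Or.inr (hqlt1 i).ne_top)
    have heq : ∀ᶠ n in atTop, (1 - q i) * P (C n)
        = q i * ∏ j ∈ Finset.range n, (1 - q j) := by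
      filter_upwards [eventually_ge_atTop (i + 1)] with n hn
      have hi : i ∈ Finset.range n := Finset.mem_range.2 hn
      rw [hPC n, ← Finset.mul_prod_erase _ _ hi, mul_left_comm]
    have := tendsto_nhds_unique (h1.congr' heq) h2
    -- (1 - q i) * P (E i) = q i * Z = (1 - q i) * (Z * ofReal (p i))
    have h3 : (1 - q i) * P (E i) = (1 - q i) * (Z * ENNReal.ofReal (p i)) := by
      rw [this]
      conv_lhs => rw [hqid i]
      rw [mul_comm (ENNReal.ofReal (p i)) (1 - q i), mul_assoc,
        mul_comm (ENNReal.ofReal (p i)) Z]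
    exact (ENNReal.mul_right_inj (honene0 i) (honenetop i)).1 h3
  -- union
  have hUnion : {ω | ∃! i, ω ∈ A i} = ⋃ i, E i := by
    ext ω
    simp only [Set.mem_setOf_eq, ExistsUnique, Set.mem_iUnion, hE, Set.mem_inter_iff,
      Set.mem_iInter, Set.mem_compl_iff]
    constructor
    · rintro ⟨i, hi, hu⟩
      exact ⟨i, hi, fun j hj hωj => hj (hu j hωj)⟩
    · rintro ⟨i, hi, hu⟩
      exact ⟨i, hi, fun j hωj => by_contra fun hj => hu j hj hωj⟩
  have hPU : P {ω | ∃! i, ω ∈ A i} = Z := by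
    rw [hUnion, measure_iUnion ?_ hEmeas]
    · rw [tsum_congr hPE, ENNReal.tsum_mul_left,
        ← ENNReal.ofReal_tsum_of_nonneg hp0 hpsum, hp1, ENNReal.ofReal_one, mul_one]
    · intro i j hij
      refine Set.disjoint_left.2 fun ω hωi hωj => ?_
      exact (Set.mem_iInter.1 (Set.mem_iInter.1 hωi.2 j) (Ne.symm hij)) hωj.1
  refine ⟨hZpos, fun i => by rw [hEset i]; exact hPE i, hPU, fun i => ?_⟩
  rw [hEset i, hPE i, hPU, mul_comm, mul_div_assoc, ENNReal.div_self hZpos.ne' hZnetop,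
    mul_one]
end

section
/- Let (p_j)_{j∈ℕ} be nonnegative reals with Σ_j p_j < 1, set r = 1 − Σ_j p_j, and let (A_j)_{j∈ℕ} be a mutually independent family of events on a probability space with P(A_j) = p_j/(r+p_j). Let Z = ∏_{j=0}^∞ (1 − p_j/(r+p_j)) (the limit of the partial products). Then Z > 0; P(no A_j occurs) = Z; for each j, P(A_j occurs and no other A_{j'} occurs) = Z·p_j/r; P(at most one of the A_j occurs) = Z/r; and hence, conditioned on at most one event occurring, the probability that no event occurs is r and the probability that exactly A_j occurs is p_j. -/
open MeasureTheory ProbabilityTheory ENNReal Filter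

/-- Let `(p j)` be nonnegative reals with `∑ j, p j < 1`, set
`r = 1 - ∑ j, p j`, and let `(A j)` be mutually independent events with
`P (A j) = p j / (r + p j)`. Let `Z = ∏_j (1 - p j / (r + p j))` (limit of the partial
products). Then `Z > 0`; `P(no A j occurs) = Z`; for each `j`,
`P(A j occurs and no other A j' occurs) = Z · p j / r`; `P(at most one A j occurs) = Z/r`;
and hence, conditioned on at most one event occurring, the probability that no event
occurs is `r` and the probability that exactly `A j` occurs is `p j`. -/
theorem block_residual_conditioning
    {Ω : Type*} [MeasurableSpace Ω] (P : Measure Ω) [IsProbabilityMeasure P]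
    (p : ℕ → ℝ) (hp0 : ∀ j, 0 ≤ p j) (hpsum : Summable p) (hplt : ∑' j, p j < 1)
    (r : ℝ) (hr : r = 1 - ∑' j, p j)
    (A : ℕ → Set Ω) (hA : ∀ j, MeasurableSet (A j)) (hindep : iIndepSet A P)
    (hPA : ∀ j, P (A j) = ENNReal.ofReal (p j / (r + p j)))
    (Z : ℝ≥0∞)
    (hZ : Tendsto (fun n => ∏ j ∈ Finset.range n, (1 - ENNReal.ofReal (p j / (r + p j))))
      atTop (nhds Z)) :
    0 < Z ∧
      P {ω | ∀ j, ω ∉ A j} = Z ∧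
      (∀ j, P {ω | ω ∈ A j ∧ ∀ j', j' ≠ j → ω ∉ A j'} = Z * ENNReal.ofReal (p j / r)) ∧
      P {ω | ∀ j j', ω ∈ A j → ω ∈ A j' → j = j'} = Z / ENNReal.ofReal r ∧
      P {ω | ∀ j, ω ∉ A j} / P {ω | ∀ j j', ω ∈ A j → ω ∈ A j' → j = j'} =
        ENNReal.ofReal r ∧
      (∀ j, P {ω | ω ∈ A j ∧ ∀ j', j' ≠ j → ω ∉ A j'} /
          P {ω | ∀ j j', ω ∈ A j → ω ∈ A j' → j = j'} = ENNReal.ofReal (p j)) := by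
  classical
  set s : ℝ := ∑' j, p j with hs
  have hs0 : 0 ≤ s := tsum_nonneg hp0
  have hrpos : 0 < r := by rw [hr]; linarith
  have hrne : r ≠ 0 := ne_of_gt hrpos
  have hrp : ∀ j, 0 < r + p j := fun j => by have := hp0 j; linarith
  have hrpne : ∀ j, r + p j ≠ 0 := fun j => ne_of_gt (hrp j)
  -- abbreviations
  set q : ℕ → ℝ := fun j => p j / (r + p j) with hq
  have hq0 : ∀ j, 0 ≤ q j := fun j => div_nonneg (hp0 j) (hrp j).le
  have hq1 : ∀ j, q j ≤ 1 := fun j => by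
    rw [hq, div_le_one (hrp j)]; linarith
  have hsub : ∀ j, (1 : ℝ) - q j = r / (r + p j) := fun j => by
    show (1 : ℝ) - p j / (r + p j) = r / (r + p j)
    rw [eq_div_iff (hrpne j), sub_mul, div_mul_cancel₀ _ (hrpne j)]
    ring
  have h1q : ∀ j, (1 : ℝ≥0∞) - ENNReal.ofReal (q j) = ENNReal.ofReal (r / (r + p j)) := by
    intro j
    rw [← hsub j, ENNReal.ofReal_sub _ (hq0 j), ENNReal.ofReal_one]
  -- independence of families built from A and complements
  have hgen : iIndep (fun i => MeasurableSpace.generateFrom {A i}) P :=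
    (iIndepSet_iff_iIndep A P).1 hindep
  have key : ∀ (B : ℕ → Set Ω), (∀ i, B i = A i ∨ B i = (A i)ᶜ) →
      ∀ S : Finset ℕ, P (⋂ i ∈ S, B i) = ∏ i ∈ S, P (B i) := by
    intro B hB S
    refine hgen.meas_biInter (fun i _ => ?_)
    have hAi : MeasurableSet[MeasurableSpace.generateFrom {A i}] (A i) :=
      MeasurableSpace.measurableSet_generateFrom (Set.mem_singleton (A i))
    rcases hB i with h | h <;> rw [h]
    · exact hAi
    · exact hAi.compl
  have hPAc : ∀ j, P ((A j)ᶜ) = 1 - ENNReal.ofReal (q j) := by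
    intro j
    rw [prob_compl_eq_one_sub (hA j), hPA j]
  -- the partial products
  set F : ℕ → ℝ≥0∞ := fun n => ∏ j ∈ Finset.range n, (1 - ENNReal.ofReal (q j)) with hF
  -- events
  set N : Set Ω := ⋂ j, (A j)ᶜ with hN
  have hNset : {ω : Ω | ∀ j, ω ∉ A j} = N := by
    ext ω; simp [hN]
  set E : ℕ → Set Ω := fun j => A j ∩ ⋂ (j') (_ : j' ≠ j), (A j')ᶜ with hE
  have hEset : ∀ j, {ω : Ω | ω ∈ A j ∧ ∀ j', j' ≠ j → ω ∉ A j'} = E j := by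
    intro j; ext ω; simp [hE]
  have hEmem : ∀ j ω, ω ∈ E j ↔ (ω ∈ A j ∧ ∀ j', j' ≠ j → ω ∉ A j') := by
    intro j ω; simp [hE]
  have hNmem : ∀ ω, ω ∈ N ↔ ∀ j, ω ∉ A j := by
    intro ω; simp [hN]
  have hEmeas : ∀ j, MeasurableSet (E j) := fun j =>
    (hA j).inter (MeasurableSet.iInter fun j' => MeasurableSet.iInter fun _ => (hA j').compl)
  have hNmeas : MeasurableSet N := MeasurableSet.iInter fun j => (hA j).compl
  -- P N = Z
  have hCN : Tendsto (fun n => P (⋂ j ∈ Finset.range n, (A j)ᶜ)) atTop (nhds (P N)) := by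
    have h1 : (⋂ n, ⋂ j ∈ Finset.range n, (A j)ᶜ) = N := by
      ext ω
      simp only [Set.mem_iInter, Finset.mem_range, hN, Set.mem_compl_iff]
      exact ⟨fun h j => h (j + 1) j (Nat.lt_succ_self j), fun h n j _ => h j⟩
    have h2 : Antitone (fun n => ⋂ j ∈ Finset.range n, (A j)ᶜ) := by
      intro m n hmn
      exact Set.biInter_subset_biInter_left fun j hj =>
        Finset.mem_range.2 (lt_of_lt_of_le (Finset.mem_range.1 hj) hmn)
    have := tendsto_measure_iInter_atTop
      (s := fun n => ⋂ j ∈ Finset.range n, (A j)ᶜ)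
      (fun n => (MeasurableSet.biInter (Set.to_countable _)
        (fun j _ => (hA j).compl)).nullMeasurableSet)
      h2 ⟨0, measure_ne_top P _⟩
    rwa [h1] at this
  have hFn : ∀ n, P (⋂ j ∈ Finset.range n, (A j)ᶜ) = F n := by
    intro n
    rw [key (fun j => (A j)ᶜ) (fun i => Or.inr rfl)]
    exact Finset.prod_congr rfl fun j _ => hPAc j
  have hPN : P N = Z := by
    refine tendsto_nhds_unique ?_ hZ
    exact hCN.congr hFn
  -- Z > 0
  have hFreal : ∀ n, F n = ENNReal.ofReal (∏ j ∈ Finset.range n, (r / (r + p j))) := by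
    intro n
    rw [ENNReal.ofReal_prod_of_nonneg (fun j _ => div_nonneg hrpos.le (hrp j).le)]
    exact Finset.prod_congr rfl fun j _ => h1q j
  have hZpos : 0 < Z := by
    have hlow : ∀ n, ENNReal.ofReal (Real.exp (-(s / r))) ≤ F n := by
      intro n
      rw [hFreal n]
      apply ENNReal.ofReal_le_ofReal
      have h1 : ∀ j, Real.exp (-(p j / r)) ≤ r / (r + p j) := by
        intro j
        rw [Real.exp_neg]
        rw [inv_le_comm₀ (Real.exp_pos _) (div_pos hrpos (hrp j))]
        calc (r / (r + p j))⁻¹ = (r + p j) / r := by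
              rw [inv_div]
          _ = 1 + p j / r := by field_simp
          _ ≤ Real.exp (p j / r) := by
              have := Real.add_one_le_exp (p j / r); linarith
      calc Real.exp (-(s / r)) ≤ Real.exp (-(∑ j ∈ Finset.range n, p j / r)) := by
            apply Real.exp_le_exp.2
            rw [neg_le_neg_iff, ← Finset.sum_div]
            gcongr
            exact Summable.sum_le_tsum _ (fun j _ => hp0 j) hpsum
        _ = ∏ j ∈ Finset.range n, Real.exp (-(p j / r)) := by
            rw [← Real.exp_sum]; simp
        _ ≤ ∏ j ∈ Finset.range n, (r / (r + p j)) :=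
            Finset.prod_le_prod (fun j _ => (Real.exp_pos _).le) (fun j _ => h1 j)
    have : ENNReal.ofReal (Real.exp (-(s / r))) ≤ Z :=
      ge_of_tendsto hZ (Eventually.of_forall hlow)
    exact lt_of_lt_of_le (ENNReal.ofReal_pos.2 (Real.exp_pos _)) this
  have hZne : Z ≠ 0 := ne_of_gt hZpos
  have hZle1 : Z ≤ 1 := by
    refine le_of_tendsto hZ (Eventually.of_forall fun n => ?_)
    exact Finset.prod_le_one (fun j _ => zero_le) (fun j _ => tsub_le_self)
  have hZtop : Z ≠ ∞ := (lt_of_le_of_lt hZle1 (by norm_num)).ne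
  -- P (E j) = Z * ofReal (p j / r)
  have hPE : ∀ j, P (E j) = Z * ENNReal.ofReal (p j / r) := by
    intro j
    set B : ℕ → Set Ω := fun i => if i = j then A j else (A i)ᶜ with hB
    have hBor : ∀ i, B i = A i ∨ B i = (A i)ᶜ := by
      intro i
      by_cases h : i = j
      · subst h; left; simp [hB]
      · right; simp [hB, h]
    have hBmeas : ∀ i, MeasurableSet (B i) := by
      intro i; rcases hBor i with h | h <;> rw [h]
      exacts [hA i, (hA i).compl]
    have h1 : (⋂ n, ⋂ i ∈ Finset.range n, B i) = E j := by
      ext ω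
      simp only [Set.mem_iInter, Finset.mem_range, hE, Set.mem_inter_iff, Set.mem_compl_iff]
      constructor
      · intro h
        have hAll : ∀ i, ω ∈ B i := fun i => h (i + 1) i (Nat.lt_succ_self i)
        constructor
        · have := hAll j; simpa [hB] using this
        · intro j' hj'; have := hAll j'; simpa [hB, hj'] using this
      · rintro ⟨h1, h2⟩ n i _
        by_cases h : i = j
        · subst h; simpa [hB] using h1
        · simpa [hB, h] using h2 i h
    have h2 : Antitone (fun n => ⋂ i ∈ Finset.range n, B i) := by
      intro m n hmn
      exact Set.biInter_subset_biInter_left fun i hi =>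
        Finset.mem_range.2 (lt_of_lt_of_le (Finset.mem_range.1 hi) hmn)
    have htend : Tendsto (fun n => P (⋂ i ∈ Finset.range n, B i)) atTop (nhds (P (E j))) := by
      have := tendsto_measure_iInter_atTop
        (s := fun n => ⋂ i ∈ Finset.range n, B i)
        (fun n => (MeasurableSet.biInter (Set.to_countable _)
          (fun i _ => hBmeas i)).nullMeasurableSet)
        h2 ⟨0, measure_ne_top P _⟩
      rwa [h1] at this
    have heq : ∀ n, j < n →
        P (⋂ i ∈ Finset.range n, B i) = ENNReal.ofReal (p j / r) * F n := by
      intro n hn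
      have hjmem : j ∈ Finset.range n := Finset.mem_range.2 hn
      rw [key B hBor]
      have hPB : ∀ i, i ≠ j → P (B i) = 1 - ENNReal.ofReal (q i) := by
        intro i hi; rw [hB]; simp only [if_neg hi]; exact hPAc i
      rw [← Finset.mul_prod_erase _ _ hjmem]
      have hPBj : P (B j) = ENNReal.ofReal (q j) := by
        rw [hB]; simp only [if_pos rfl]; exact hPA j
      rw [hPBj, Finset.prod_congr rfl (fun i hi => hPB i (Finset.ne_of_mem_erase hi))]
      have hFsplit : F n = (1 - ENNReal.ofReal (q j)) *
          ∏ i ∈ (Finset.range n).erase j, (1 - ENNReal.ofReal (q i)) :=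
        (Finset.mul_prod_erase _ _ hjmem).symm
      rw [hFsplit, ← mul_assoc]
      congr 1
      rw [h1q j, ← ENNReal.ofReal_mul (div_nonneg (hp0 j) hrpos.le)]
      congr 1
      rw [div_mul_div_comm, mul_comm (p j) r, mul_div_mul_left _ _ hrne]
    have : Tendsto (fun n => ENNReal.ofReal (p j / r) * F n) atTop
        (nhds (ENNReal.ofReal (p j / r) * Z)) :=
      ENNReal.Tendsto.const_mul hZ (Or.inr ENNReal.ofReal_ne_top)
    have := tendsto_nhds_unique htend
      (this.congr' (by
        filter_upwards [eventually_gt_atTop j] with n hn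
        exact (heq n hn).symm))
    rw [this, mul_comm]
  -- the "at most one" event
  set S : Set Ω := {ω | ∀ j j', ω ∈ A j → ω ∈ A j' → j = j'} with hSdef
  have hSdecomp : S = N ∪ ⋃ j, E j := by
    ext ω
    simp only [hSdef, Set.mem_setOf_eq, Set.mem_union, Set.mem_iUnion]
    constructor
    · intro h
      by_cases hall : ∀ j, ω ∉ A j
      · exact Or.inl ((hNmem ω).2 hall)
      · push_neg at hall
        obtain ⟨j, hj⟩ := hall
        refine Or.inr ⟨j, (hEmem j ω).2 ⟨hj, ?_⟩⟩
        intro j' hj' hmem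
        exact hj' (h j' j hmem hj)
    · rintro (h | ⟨j, hj⟩) j1 j2 h1' h2'
      · exact absurd h1' ((hNmem ω).1 h j1)
      · obtain ⟨hj1, h2⟩ := (hEmem j ω).1 hj
        have e1 : j1 = j := by by_contra hne; exact h2 j1 hne h1'
        have e2 : j2 = j := by by_contra hne; exact h2 j2 hne h2'
        rw [e1, e2]
    -- disjointness
  have hEdisj : Pairwise (Function.onFun Disjoint E) := by
    intro i k hik
    rw [Function.onFun, Set.disjoint_left]
    intro ω h1 h3
    obtain ⟨hi1, hi2⟩ := (hEmem i ω).1 h1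
    obtain ⟨hk1, _⟩ := (hEmem k ω).1 h3
    exact hi2 k (Ne.symm hik) hk1
  have hNdisj : Disjoint N (⋃ j, E j) := by
    rw [Set.disjoint_left]
    intro ω hω hω2
    simp only [Set.mem_iUnion] at hω2
    obtain ⟨j, hj⟩ := hω2
    exact ((hNmem ω).1 hω j) ((hEmem j ω).1 hj).1
  have hPS : P S = Z / ENNReal.ofReal r := by
    rw [hSdecomp, measure_union hNdisj (MeasurableSet.iUnion hEmeas),
      measure_iUnion hEdisj hEmeas, hPN]
    simp_rw [hPE]
    rw [ENNReal.tsum_mul_left]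
    have htsum : ∑' j, ENNReal.ofReal (p j / r) = ENNReal.ofReal (s / r) := by
      rw [← ENNReal.ofReal_tsum_of_nonneg (fun j => div_nonneg (hp0 j) hrpos.le)
        (hpsum.div_const r), tsum_div_const]
    rw [htsum, ← mul_one Z, mul_assoc, one_mul, ← mul_add]
    have : (1 : ℝ≥0∞) + ENNReal.ofReal (s / r) = ENNReal.ofReal (1 / r) := by
      rw [← ENNReal.ofReal_one, ← ENNReal.ofReal_add zero_le_one
        (div_nonneg hs0 hrpos.le)]
      congr 1
      field_simp
      linarith [hr]
    rw [this, ENNReal.ofReal_div_of_pos hrpos, ENNReal.ofReal_one, mul_one_div, mul_one]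
  have horne : ENNReal.ofReal r ≠ 0 := by
    simp [ENNReal.ofReal_eq_zero, not_le, hrpos]
  have hZr : Z / (Z / ENNReal.ofReal r) = ENNReal.ofReal r := by
    rw [div_eq_mul_inv Z (Z / ENNReal.ofReal r),
      ENNReal.inv_div (Or.inl ENNReal.ofReal_ne_top) (Or.inl horne),
      ENNReal.mul_div_cancel hZne hZtop]
  refine ⟨hZpos, by rw [hNset, hPN], fun j => by rw [hEset j, hPE j], hPS, ?_, ?_⟩
  · rw [hNset, hPN, hPS, hZr]
  · intro j
    rw [hEset j, hPE j, hPS, mul_comm, mul_div_assoc, hZr,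
      ← ENNReal.ofReal_mul (div_nonneg (hp0 j) hrpos.le), div_mul_cancel₀ _ hrne]
end

section
/- For i ∈ ℕ₊ let p_i = 1/(i²+1), let Z = ∏_{i=1}^∞ (1 − p_i) (the limit of the partial products, which lies in (0,1)), and for each finite subset I ⊆ ℕ₊ let P(I) = Z · ∏_{i∈I} p_i/(1−p_i). Then for every positive integer c, the sum Σ_{I} |I| · P(I)^{c/|I|}, taken over all nonempty finite subsets I of ℕ₊ with real exponent c/|I|, diverges (equals ∞). -/
open Filter ENNReal

/-- For `i ∈ ℕ₊` let `p i = 1/(i² + 1)`, let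
`Z = ∏_{i=1}^∞ (1 - p i)` (limit of partial products, lying in `(0,1)`), and for each
finite `I ⊆ ℕ₊` let `P I = Z · ∏_{i ∈ I} p i / (1 - p i)`. Then for every positive
integer `c`, the sum `∑_{I ≠ ∅} |I| · (P I)^(c/|I|)` over nonempty finite subsets of
`ℕ₊` diverges. -/
theorem ti_example_fails_sufficient_condition
    (Z : ℝ)
    (hZ : Tendsto
      (fun n : ℕ => ∏ i ∈ Finset.range n, (1 - 1 / (((i : ℝ) + 1) ^ 2 + 1)))
      atTop (nhds Z))
    (hZ0 : 0 < Z) (hZ1 : Z < 1)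
    (c : ℕ) (hc : 1 ≤ c) :
    ∑' I : {I : Finset ℕ+ // I.Nonempty},
        ENNReal.ofReal
          (((I : Finset ℕ+).card : ℝ) *
            (Z * ∏ i ∈ (I : Finset ℕ+),
                (1 / (((i : ℕ) : ℝ) ^ 2 + 1)) / (1 - 1 / (((i : ℕ) : ℝ) ^ 2 + 1))) ^
              ((c : ℝ) / ((I : Finset ℕ+).card : ℝ))) = ⊤ := by
  clear hZ hZ1
  set g : {I : Finset ℕ+ // I.Nonempty} → ℝ≥0∞ := fun I =>
    ENNReal.ofReal
      (((I : Finset ℕ+).card : ℝ) *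
        (Z * ∏ i ∈ (I : Finset ℕ+),
            (1 / (((i : ℕ) : ℝ) ^ 2 + 1)) / (1 - 1 / (((i : ℕ) : ℝ) ^ 2 + 1))) ^
          ((c : ℝ) / ((I : Finset ℕ+).card : ℝ))) with hg
  -- the ratio p/(1-p) simplifies to 1/i²
  have hr : ∀ i : ℕ+,
      (1 / (((i : ℕ) : ℝ) ^ 2 + 1)) / (1 - 1 / (((i : ℕ) : ℝ) ^ 2 + 1))
        = 1 / ((i : ℕ) : ℝ) ^ 2 := by
    intro i
    have hx : (0 : ℝ) < ((i : ℕ) : ℝ) := by exact_mod_cast i.pos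
    have h1 : ((i : ℕ) : ℝ) ^ 2 + 1 ≠ 0 := by positivity
    have h2 : ((i : ℕ) : ℝ) ^ 2 ≠ 0 := by positivity
    field_simp
    ring
  -- the fixed base set F = {1, ..., 2c}
  have h2c : 0 < 2 * c := by omega
  set m : ℕ+ := ⟨2 * c, h2c⟩ with hm
  set F : Finset ℕ+ := Finset.Icc 1 m with hF
  have hFcard : F.card = 2 * c := by
    rw [hF, PNat.card_Icc]
    simp [hm]
  -- the moving points j k = 2c + k + 1
  set j : ℕ → ℕ+ := fun k => ⟨2 * c + k + 1, by omega⟩ with hj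
  have hjF : ∀ k, j k ∉ F := by
    intro k hk
    rw [hF, Finset.mem_Icc] at hk
    have := hk.2
    rw [← PNat.coe_le_coe] at this
    simp only [hj, hm, PNat.mk_coe] at this
    omega
  set f : ℕ → {I : Finset ℕ+ // I.Nonempty} :=
    fun k => ⟨insert (j k) F, ⟨j k, Finset.mem_insert_self _ _⟩⟩ with hfdef
  have hfinj : Function.Injective f := by
    intro a b hab
    have h1 : j a ∈ insert (j b) F := by
      have : (f a : Finset ℕ+) = insert (j b) F := by rw [hab]
      rw [← this]; exact Finset.mem_insert_self _ _
    rcases Finset.mem_insert.1 h1 with h | h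
    · have := congrArg (fun x : ℕ+ => (x : ℕ)) h
      simp [hj] at this
      omega
    · exact absurd h (hjF a)
  have hcard : ∀ k, (insert (j k) F).card = 2 * c + 1 := by
    intro k
    rw [Finset.card_insert_of_notMem (hjF k), hFcard]
  -- the fixed product Q
  set Q : ℝ := ∏ i ∈ F, (1 / ((i : ℕ) : ℝ) ^ 2) with hQdef
  have hQ : 0 < Q := by
    apply Finset.prod_pos
    intro i _
    have : (0 : ℝ) < ((i : ℕ) : ℝ) := by exact_mod_cast i.pos
    positivity
  set s : ℝ := (c : ℝ) / ((2 * c + 1 : ℕ) : ℝ) with hs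
  have hn1 : (0 : ℝ) < ((2 * c + 1 : ℕ) : ℝ) := by positivity
  have hs0 : 0 < s := by
    rw [hs]; apply div_pos _ hn1; exact_mod_cast hc
  have hs1 : 2 * s ≤ 1 := by
    rw [hs, ← mul_div_assoc, div_le_one hn1]
    push_cast
    linarith
  have hZQ : 0 < Z * Q := mul_pos hZ0 hQ
  set B : ℝ := (Z * Q) ^ s with hB
  have hB0 : 0 < B := Real.rpow_pos_of_pos hZQ s
  -- the key per-term lower bound
  have hterm : ∀ k : ℕ, ENNReal.ofReal (B / ((k : ℝ) + 1)) ≤ g (f k) := by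
    intro k
    have hjk : (1 : ℝ) ≤ ((j k : ℕ) : ℝ) := by
      have : 1 ≤ (j k : ℕ) := (j k).one_le
      exact_mod_cast this
    have hjk0 : (0 : ℝ) < ((j k : ℕ) : ℝ) := lt_of_lt_of_le one_pos hjk
    -- compute the product over f k
    have hprod : (∏ i ∈ (f k : Finset ℕ+),
        (1 / (((i : ℕ) : ℝ) ^ 2 + 1)) / (1 - 1 / (((i : ℕ) : ℝ) ^ 2 + 1)))
        = (1 / ((j k : ℕ) : ℝ) ^ 2) * Q := by
      have : (f k : Finset ℕ+) = insert (j k) F := rfl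
      rw [this, Finset.prod_insert (hjF k)]
      rw [hr (j k)]
      congr 1
      rw [hQdef]
      exact Finset.prod_congr rfl fun i _ => hr i
    rw [hg]
    simp only
    rw [hprod, hcard k]
    have hexp : (c : ℝ) / ((2 * c + 1 : ℕ) : ℝ) = s := hs.symm
    apply ENNReal.ofReal_le_ofReal
    have hbase : Z * (1 / ((j k : ℕ) : ℝ) ^ 2 * Q) = (Z * Q) / ((j k : ℕ) : ℝ) ^ 2 := by
      ring
    push_cast
    rw [show ((2:ℝ) * (c:ℝ) + 1) = ((2 * c + 1 : ℕ) : ℝ) by push_cast; ring]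
    rw [hexp, hbase]
    rw [Real.div_rpow hZQ.le (by positivity)]
    -- (j k ^ 2) ^ s = j k ^ (2 s) ≤ j k
    have hpow : (((j k : ℕ) : ℝ) ^ 2) ^ s ≤ ((j k : ℕ) : ℝ) := by
      rw [← Real.rpow_natCast ((j k : ℕ) : ℝ) 2, ← Real.rpow_mul hjk0.le]
      calc ((j k : ℕ) : ℝ) ^ ((2 : ℕ) * s) ≤ ((j k : ℕ) : ℝ) ^ (1 : ℝ) := by
            apply Real.rpow_le_rpow_of_exponent_le hjk
            push_cast; linarith
        _ = ((j k : ℕ) : ℝ) := Real.rpow_one _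
    have hpow0 : (0 : ℝ) < (((j k : ℕ) : ℝ) ^ 2) ^ s :=
      Real.rpow_pos_of_pos (by positivity) s
    have h1 : (Z * Q) ^ s / ((j k : ℕ) : ℝ) ≤ (Z * Q) ^ s / (((j k : ℕ) : ℝ) ^ 2) ^ s :=
      div_le_div_of_nonneg_left hB0.le hpow0 hpow
    have hjle : ((j k : ℕ) : ℝ) ≤ ((2 * c + 1 : ℕ) : ℝ) * ((k : ℝ) + 1) := by
      have : ((j k : ℕ) : ℕ) = 2 * c + k + 1 := rfl
      rw [show ((j k : ℕ) : ℝ) = ((2 * c + k + 1 : ℕ) : ℝ) by exact_mod_cast this]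
      push_cast
      nlinarith [Nat.cast_nonneg (α := ℝ) k, Nat.cast_nonneg (α := ℝ) c, hc]
    have h2 : (Z * Q) ^ s / (((2 * c + 1 : ℕ) : ℝ) * ((k : ℝ) + 1)) ≤
        (Z * Q) ^ s / ((j k : ℕ) : ℝ) :=
      div_le_div_of_nonneg_left hB0.le hjk0 hjle
    calc B / ((k : ℝ) + 1)
        = ((2 * c + 1 : ℕ) : ℝ) * ((Z * Q) ^ s / (((2 * c + 1 : ℕ) : ℝ) * ((k : ℝ) + 1))) := by
          rw [← mul_div_assoc, mul_div_mul_left _ _ hn1.ne']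
      _ ≤ ((2 * c + 1 : ℕ) : ℝ) * ((Z * Q) ^ s / ((j k : ℕ) : ℝ)) := by
          apply mul_le_mul_of_nonneg_left h2 hn1.le
      _ ≤ ((2 * c + 1 : ℕ) : ℝ) * ((Z * Q) ^ s / (((j k : ℕ) : ℝ) ^ 2) ^ s) := by
          apply mul_le_mul_of_nonneg_left h1 hn1.le
  -- the harmonic lower series diverges
  have hdiv : (∑' k : ℕ, ENNReal.ofReal (B / ((k : ℝ) + 1))) = ⊤ := by
    by_contra h
    have h' : (∑' k : ℕ, ((B / ((k : ℝ) + 1)).toNNReal : ℝ≥0∞)) ≠ ⊤ := h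
    have hsum : Summable fun k : ℕ => (((B / ((k : ℝ) + 1)).toNNReal : ℝ)) :=
      ENNReal.tsum_coe_ne_top_iff_summable_coe.1 h'
    have heq : ∀ k : ℕ, (((B / ((k : ℝ) + 1)).toNNReal : ℝ)) = B / ((k : ℝ) + 1) := by
      intro k
      apply Real.coe_toNNReal
      positivity
    rw [summable_congr heq] at hsum
    have hsum2 : Summable fun k : ℕ => B⁻¹ * (B / ((k : ℝ) + 1)) := hsum.mul_left _
    have heq2 : ∀ k : ℕ, B⁻¹ * (B / ((k : ℝ) + 1)) = 1 / ((k : ℝ) + 1) := by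
      intro k
      field_simp
    rw [summable_congr heq2] at hsum2
    have : Summable fun k : ℕ => 1 / (k : ℝ) := by
      rw [← summable_nat_add_iff 1]
      convert hsum2 using 2 with k
      · rfl
      push_cast
      ring
    exact Real.not_summable_one_div_natCast this
  rw [eq_top_iff, ← hdiv]
  calc (∑' k : ℕ, ENNReal.ofReal (B / ((k : ℝ) + 1)))
      ≤ ∑' k : ℕ, g (f k) := ENNReal.tsum_le_tsum hterm
    _ ≤ ∑' I, g I := ENNReal.tsum_comp_le_tsum_of_injective hfinj g
end

section
/- Let F be a countable set, μ a probability distribution on the finite subsets of F, and p : F → [0,1] such that μ is tuple-independent with marginals p, i.e., for every finite S ⊆ F, Pr_{I∼μ}(S ⊆ I) = ∏_{f∈S} p(f). Let G be a set, V a monotone map from finite subsets of F to finite subsets of G (I ⊆ J implies V(I) ⊆ V(J)), and ν the pushforward of μ under V. Then ν has no two mutually exclusive facts of positive marginal probability: for all g₁, g₂ ∈ G, if Pr_{D∼ν}(g₁ ∈ D) > 0 and Pr_{D∼ν}(g₂ ∈ D) > 0, then Pr_{D∼ν}(g₁ ∈ D and g₂ ∈ D) > 0. -/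
open MeasureTheory ENNReal

/-- Let `F` be countable, `μ` a probability distribution on the finite
subsets of `F` which is tuple-independent with marginals `p : F → [0,1]`, i.e.
`Pr_{I∼μ}(S ⊆ I) = ∏_{f∈S} p f` for every finite `S ⊆ F`. Let `V` be a monotone map from
finite subsets of `F` to finite subsets of `G` and `ν` the pushforward of `μ` under `V`.
Then `ν` has no two mutually exclusive facts of positive marginal probability: if
`g₁, g₂` have positive marginal probability in `ν`, so does their conjunction. -/
theorem monotone_view_of_TI_no_mutually_exclusive_facts
    {F G : Type*} [Countable F]
    [MeasurableSpace (Finset F)] [MeasurableSingletonClass (Finset F)]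
    (μ : Measure (Finset F)) [IsProbabilityMeasure μ]
    (p : F → ℝ≥0∞) (hp1 : ∀ f, p f ≤ 1)
    (hTI : ∀ S : Finset F, μ {I | S ⊆ I} = ∏ f ∈ S, p f)
    (V : Finset F → Finset G) (hV : ∀ I J : Finset F, I ⊆ J → V I ⊆ V J)
    (g₁ g₂ : G)
    (h₁ : 0 < μ {I | g₁ ∈ V I}) (h₂ : 0 < μ {I | g₂ ∈ V I}) :
    0 < μ {I | g₁ ∈ V I ∧ g₂ ∈ V I} := by
  classical
  -- From a positive-measure set, extract a point of positive measure.
  have hpoint : ∀ s : Set (Finset F), 0 < μ s → ∃ I ∈ s, 0 < μ {I} := by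
    intro s hs
    by_contra h
    push_neg at h
    have h0 : ∀ I ∈ s, μ {I} = 0 := fun I hI => le_antisymm (h I hI) zero_le
    have : μ s = 0 := by
      have hcut : s = ⋃ I ∈ s, {I} := by simp
      rw [hcut]
      exact measure_biUnion_null_iff (Set.to_countable s) |>.2 h0
    exact hs.ne' this
  obtain ⟨I₁, hI₁, hμ₁⟩ := hpoint _ h₁
  obtain ⟨I₂, hI₂, hμ₂⟩ := hpoint _ h₂
  -- products over I₁ and I₂ are positive
  have hprodpos : ∀ (I : Finset F), 0 < μ {I} → 0 < ∏ f ∈ I, p f := by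
    intro I hI
    rw [← hTI]
    refine lt_of_lt_of_le hI (measure_mono ?_)
    intro J hJ
    simp only [Set.mem_singleton_iff] at hJ
    subst hJ
    exact fun x hx => hx
  have h1p := hprodpos I₁ hμ₁
  have h2p := hprodpos I₂ hμ₂
  -- product over the union is positive
  have hunion : 0 < ∏ f ∈ I₁ ∪ I₂, p f := by
    rw [← Finset.union_sdiff_self_eq_union, Finset.prod_union Finset.disjoint_sdiff]
    have h2p' : 0 < ∏ f ∈ I₂ \ I₁, p f := by
      refine lt_of_lt_of_le h2p ?_
      have hsplit : I₂ = (I₂ \ I₁) ∪ (I₂ ∩ I₁) := by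
        ext x; simp [Finset.mem_sdiff, Finset.mem_union, Finset.mem_inter]; tauto
      have hdisj : Disjoint (I₂ \ I₁) (I₂ ∩ I₁) := by
        rw [Finset.disjoint_left]
        intro x hx hx'
        exact (Finset.mem_sdiff.1 hx).2 (Finset.mem_inter.1 hx').2
      calc ∏ f ∈ I₂, p f = (∏ f ∈ I₂ \ I₁, p f) * ∏ f ∈ I₂ ∩ I₁, p f := by
            rw [← Finset.prod_union hdisj, ← hsplit]
        _ ≤ (∏ f ∈ I₂ \ I₁, p f) * 1 := by
            gcongr
            exact Finset.prod_le_one (fun _ _ => zero_le) (fun f _ => hp1 f)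
        _ = ∏ f ∈ I₂ \ I₁, p f := mul_one _
    exact ENNReal.mul_pos h1p.ne' h2p'.ne'
  -- conclude
  refine lt_of_lt_of_le (hunion.trans_eq (hTI (I₁ ∪ I₂)).symm) (measure_mono ?_)
  intro J hJ
  simp only [Set.mem_setOf_eq] at hJ ⊢
  exact ⟨hV _ _ (fun x hx => hJ (Finset.mem_union_left _ hx)) hI₁,
         hV _ _ (fun x hx => hJ (Finset.mem_union_right _ hx)) hI₂⟩
end

section
/- Let (x_k)_{k∈ℕ} and (y_k)_{k∈ℕ} be sequences in [0,1] with x_k + y_k ≤ 1 for all k, Σ_k x_k < ∞ and Σ_k y_k < ∞, and let ε ∈ [0,1]. If 1 − ∏_k (1−x_k) − ∏_k (1−y_k) + ∏_k (1−x_k−y_k) ≥ ε², then Σ_k x_k + Σ_k y_k ≥ ε. (The infinite products are limits of the finite partial products.) -/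
open Filter

private lemma weier_aux (z : ℕ → ℝ) (hz0 : ∀ k, 0 ≤ z k) (hz1 : ∀ k, z k ≤ 1) (n : ℕ) :
    1 - ∑ k ∈ Finset.range n, z k ≤ ∏ k ∈ Finset.range n, (1 - z k) := by
  induction n with
  | zero => simp
  | succ n ih =>
    rw [Finset.prod_range_succ, Finset.sum_range_succ]
    have hP : (0:ℝ) ≤ ∏ k ∈ Finset.range n, (1 - z k) :=
      Finset.prod_nonneg fun k _ => by linarith [hz1 k]
    have hS : (0:ℝ) ≤ ∑ k ∈ Finset.range n, z k :=
      Finset.sum_nonneg fun k _ => hz0 k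
    nlinarith [hz0 n, hz1 n]

/-- Let `(x k)`, `(y k)` be `[0,1]`-valued sequences with
`x k + y k ≤ 1`, both summable, and let `ε ∈ [0,1]`. If
`1 - ∏_k (1 - x k) - ∏_k (1 - y k) + ∏_k (1 - x k - y k) ≥ ε²`, then
`∑ k, x k + ∑ k, y k ≥ ε` (the infinite products are limits of the partial products). -/
theorem weierstrass_product_estimate
    (x y : ℕ → ℝ)
    (hx0 : ∀ k, 0 ≤ x k) (hx1 : ∀ k, x k ≤ 1)
    (hy0 : ∀ k, 0 ≤ y k) (hy1 : ∀ k, y k ≤ 1)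
    (hxy : ∀ k, x k + y k ≤ 1)
    (hxs : Summable x) (hys : Summable y)
    (ε : ℝ) (hε0 : 0 ≤ ε) (hε1 : ε ≤ 1)
    (Px Py Pxy : ℝ)
    (hPx : Tendsto (fun n => ∏ k ∈ Finset.range n, (1 - x k)) atTop (nhds Px))
    (hPy : Tendsto (fun n => ∏ k ∈ Finset.range n, (1 - y k)) atTop (nhds Py))
    (hPxy : Tendsto (fun n => ∏ k ∈ Finset.range n, (1 - x k - y k)) atTop (nhds Pxy))
    (h : ε ^ 2 ≤ 1 - Px - Py + Pxy) :
    ε ≤ (∑' k, x k) + ∑' k, y k := by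
  set Sx := ∑' k, x k with hSx
  set Sy := ∑' k, y k with hSy
  have hSx0 : 0 ≤ Sx := tsum_nonneg hx0
  have hSy0 : 0 ≤ Sy := tsum_nonneg hy0
  -- partial sums ≤ tsum
  have hpsx : ∀ n, ∑ k ∈ Finset.range n, x k ≤ Sx := fun n =>
    Summable.sum_le_tsum _ (fun k _ => hx0 k) hxs
  have hpsy : ∀ n, ∑ k ∈ Finset.range n, y k ≤ Sy := fun n =>
    Summable.sum_le_tsum _ (fun k _ => hy0 k) hys
  -- 1 - Sx ≤ Px and 1 - Sy ≤ Py
  have hPxge : 1 - Sx ≤ Px :=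
    ge_of_tendsto' hPx fun n => le_trans (by linarith [hpsx n]) (weier_aux x hx0 hx1 n)
  have hPyge : 1 - Sy ≤ Py :=
    ge_of_tendsto' hPy fun n => le_trans (by linarith [hpsy n]) (weier_aux y hy0 hy1 n)
  -- Px ≤ 1, Py ≤ 1
  have hPxle : Px ≤ 1 := le_of_tendsto' hPx fun n =>
    Finset.prod_le_one (fun k _ => by linarith [hx1 k]) (fun k _ => by linarith [hx0 k])
  have hPyle : Py ≤ 1 := le_of_tendsto' hPy fun n =>
    Finset.prod_le_one (fun k _ => by linarith [hy1 k]) (fun k _ => by linarith [hy0 k])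
  -- Pxy ≤ Px * Py
  have hPxyle : Pxy ≤ Px * Py := by
    refine le_of_tendsto_of_tendsto' hPxy (hPx.mul hPy) fun n => ?_
    rw [← Finset.prod_mul_distrib]
    refine Finset.prod_le_prod (fun k _ => by linarith [hxy k]) fun k _ => ?_
    nlinarith [hx0 k, hy0 k, hxy k]
  -- combine
  have key : ε ^ 2 ≤ Sx * Sy := by nlinarith
  nlinarith
end

section
/- Let U be a countable set and (a_i, b_i)_{i∈ℕ₊} pairs of elements of U with a_i ≠ b_i and the two-element sets {a_i, b_i} pairwise disjoint. Let F = {(a_i,b_i) : i ∈ ℕ₊} ∪ {(b_i,a_i) : i ∈ ℕ₊} ⊆ U×U and define p : U×U → [0,1] by p((a_i,b_i)) = p((b_i,a_i)) = 1/i² and p(f) = 0 for f ∉ F. Let μ be a probability distribution on finite subsets of U×U that is tuple-independent with marginals p (for every finite S ⊆ U×U, Pr_{I∼μ}(S ⊆ I) = ∏_{f∈S} p(f)). Define V(I) = {(x,y) : (x,y) ∈ I and (y,x) ∈ I} and let ν be the pushforward of μ under V. Then: (i) ν-almost every world D is a simple undirected graph database, i.e., (x,y) ∈ D iff (y,x)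 ∈ D, and (x,x) ∉ D for all x; and (ii) for every finite set J ⊆ ℕ₊, Pr_{D∼ν}((a_i,b_i) ∈ D for all i ∈ J) = ∏_{i∈J} i^{−4}. -/
open MeasureTheory ENNReal

/-- The semantics of the conjunctive query `Φ(x,y) = E(x,y) ∧ E(y,x)`: it keeps from `I`
exactly those pairs whose reverse also lies in `I`. -/
def symView {U : Type*} [DecidableEq U] (I : Finset (U × U)) : Finset (U × U) :=
  I.filter (fun f => (f.2, f.1) ∈ I)

/-- Let `U` be countable, `(a i, b i)_{i ∈ ℕ₊}` pairs with `a i ≠ b i`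
and the sets `{a i, b i}` pairwise disjoint. Let `p` assign probability `1/i²` to
`(a i, b i)` and `(b i, a i)` and `0` to every other pair, and let `μ` be a
tuple-independent distribution on finite subsets of `U × U` with marginals `p`. Let `ν`
be the pushforward of `μ` under `V(I) = {(x,y) ∈ I : (y,x) ∈ I}`. Then (i) `ν`-almost
every world is a simple undirected graph database, and (ii) for every finite `J ⊆ ℕ₊`,
`Pr_{D∼ν}(∀ i ∈ J, (a i, b i) ∈ D) = ∏_{i∈J} i⁻⁴`. -/
theorem cq_self_join_representation
    {U : Type*} [Countable U] [DecidableEq U]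
    (a b : ℕ+ → U)
    (hab : ∀ i, a i ≠ b i)
    (hdisj : ∀ i j : ℕ+, i ≠ j → ({a i, b i} : Set U) ∩ {a j, b j} = ∅)
    (p : U × U → ℝ≥0∞)
    (hpab : ∀ i : ℕ+, p (a i, b i) = 1 / ((i : ℕ) : ℝ≥0∞) ^ 2)
    (hpba : ∀ i : ℕ+, p (b i, a i) = 1 / ((i : ℕ) : ℝ≥0∞) ^ 2)
    (hp0 : ∀ f : U × U, (∀ i : ℕ+, f ≠ (a i, b i) ∧ f ≠ (b i, a i)) → p f = 0)
    [MeasurableSpace (Finset (U × U))] [MeasurableSingletonClass (Finset (U × U))]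
    (μ : Measure (Finset (U × U))) [IsProbabilityMeasure μ]
    (hTI : ∀ S : Finset (U × U), μ {I | S ⊆ I} = ∏ f ∈ S, p f) :
    μ {I | (∀ x y : U, ((x, y) ∈ symView I ↔ (y, x) ∈ symView I)) ∧
        ∀ x : U, (x, x) ∉ symView I} = 1 ∧
      ∀ J : Finset ℕ+,
        μ {I | ∀ i ∈ J, (a i, b i) ∈ symView I} =
          ∏ i ∈ J, (1 / ((i : ℕ) : ℝ≥0∞) ^ 4) := by
  constructor
  · -- Part (i)
    have hmeas : ∀ s : Set (Finset (U × U)), MeasurableSet s :=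
      fun s => (Set.to_countable s).measurableSet
    have hE : {I : Finset (U × U) |
        (∀ x y : U, ((x, y) ∈ symView I ↔ (y, x) ∈ symView I)) ∧
        ∀ x : U, (x, x) ∉ symView I} = {I : Finset (U × U) | ∀ x : U, (x, x) ∉ I} := by
      ext I
      simp only [Set.mem_setOf_eq, symView, Finset.mem_filter]
      constructor
      · rintro ⟨-, h2⟩ x hx
        exact h2 x ⟨hx, hx⟩
      · intro h
        refine ⟨fun x y => ⟨fun ⟨h1, h2⟩ => ⟨h2, h1⟩, fun ⟨h1, h2⟩ => ⟨h2, h1⟩⟩, ?_⟩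
        intro x ⟨hx, _⟩
        exact h x hx
    rw [hE, ← prob_compl_eq_zero_iff (hmeas _)]
    have hcompl : ({I : Finset (U × U) | ∀ x : U, (x, x) ∉ I})ᶜ =
        ⋃ x : U, {I : Finset (U × U) | (x, x) ∈ I} := by
      ext I; simp [Set.mem_setOf_eq]
    rw [hcompl]
    refine measure_iUnion_null fun x => ?_
    have h1 : ({I : Finset (U × U) | (x, x) ∈ I}) = {I | ({(x, x)} : Finset (U × U)) ⊆ I} := by
      ext I; simp
    have hp : p (x, x) = 0 := by
      refine hp0 (x, x) fun i => ⟨?_, ?_⟩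
      · intro h; exact hab i (by injection h with h1 h2; rw [← h1, ← h2])
      · intro h; exact hab i (by injection h with h1 h2; rw [← h1, ← h2])
    rw [h1, hTI, Finset.prod_singleton, hp]
  · -- Part (ii)
    intro J
    classical
    set S : Finset (U × U) := J.biUnion (fun i => {(a i, b i), (b i, a i)}) with hS
    have hne : ∀ i j : ℕ+, i ≠ j → ∀ u v : U, u ∈ ({a i, b i} : Set U) →
        v ∈ ({a j, b j} : Set U) → u ≠ v := by
      intro i j hij u v hu hv h
      have := hdisj i j hij
      have : u ∈ ({a i, b i} : Set U) ∩ {a j, b j} := ⟨hu, h ▸ hv⟩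
      rw [hdisj i j hij] at this
      exact this
    have hset : {I : Finset (U × U) | ∀ i ∈ J, (a i, b i) ∈ symView I} = {I | S ⊆ I} := by
      ext I
      simp only [Set.mem_setOf_eq, symView, Finset.mem_filter, hS,
        Finset.biUnion_subset, Finset.insert_subset_iff, Finset.singleton_subset_iff]
    rw [hset, hTI]
    rw [Finset.prod_biUnion]
    · refine Finset.prod_congr rfl fun i _ => ?_
      have hij : ((a i, b i) : U × U) ≠ (b i, a i) :=
        fun h => hab i (congrArg Prod.fst h)
      rw [Finset.prod_pair hij, hpab, hpba, one_div, one_div,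
        ENNReal.inv_pow, ← pow_add, ← ENNReal.inv_pow]
    · intro i hi j hj hij
      simp only [Finset.disjoint_left, Finset.mem_insert, Finset.mem_singleton]
      rintro f (rfl | rfl) (h | h) <;>
      · have h1 := congrArg Prod.fst h
        have h2 := congrArg Prod.snd h
        simp at h1 h2
        first
        | exact hne i j hij _ _ (by simp) (by simp) h1
        | exact hne i j hij _ _ (by simp) (by simp) h2
end
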